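/- arXiv:1306.5463 — 12 statements merged into one kernel-verified Lean document; each statement's English description precedes it below -/
import Mathlib

section
/- If a topological space X is an Alster space, then X satisfies the selection principle S₁(𝒜, 𝒪^δ): for every sequence (U_n) of Alster covers of X, one can choose A_n ∈ U_n for each n such that {A_n : n ∈ ω} covers X. -/
open Set TopologicalSpace

universe u

def IsOpenCover {X : Type u} [TopologicalSpace X] (𝒰 : Set (Set X)) : Prop :=
  (∀ U ∈ 𝒰, IsOpen U) ∧ ⋃₀ 𝒰 = univ

def IsAlsterCover {X : Type u} [TopologicalSpace X] (𝒰 : Set (Set X)) : Prop :=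
  (∀ U ∈ 𝒰, IsGδ U) ∧ ⋃₀ 𝒰 = univ ∧ ∀ K : Set X, IsCompact K → ∃ U ∈ 𝒰, K ⊆ U

def AlsterSpace (X : Type u) [TopologicalSpace X] : Prop :=
  ∀ 𝒰 : Set (Set X), IsAlsterCover 𝒰 → ∃ 𝒱 ⊆ 𝒰, 𝒱.Countable ∧ ⋃₀ 𝒱 = univ

def IsKCover {X : Type u} [TopologicalSpace X] (𝒰 : Set (Set X)) : Prop :=
  (∀ U ∈ 𝒰, IsOpen U) ∧ ⋃₀ 𝒰 = univ ∧ ∀ K : Set X, IsCompact K → ∃ U ∈ 𝒰, K ⊆ U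

def RothbergerSpace (X : Type u) [TopologicalSpace X] : Prop :=
  ∀ 𝒰 : ℕ → Set (Set X), (∀ n, IsOpenCover (𝒰 n)) →
    ∃ f : ℕ → Set X, (∀ n, f n ∈ 𝒰 n) ∧ ⋃ n, f n = univ

/-- The list of the first `n + 1` values of `f` (the history of moves up to inning `n`). -/
def hist {α : Type u} (f : ℕ → α) (n : ℕ) : List α := (List.range (n + 1)).map f

/-- Two has a winning strategy in the Menger game on `X`. -/
def MengerTwoWin (X : Type u) [TopologicalSpace X] : Prop :=
  ∃ σ : List (Set (Set X)) → Set (Set X),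
    ∀ 𝒰 : ℕ → Set (Set X), (∀ n, IsOpenCover (𝒰 n)) →
      (∀ n, (σ (hist 𝒰 n)).Finite ∧ σ (hist 𝒰 n) ⊆ 𝒰 n) ∧
      (⋃ n, ⋃₀ σ (hist 𝒰 n)) = univ

/-- Two has a winning strategy in the Rothberger game on `X`. -/
def RothTwoWin (X : Type u) [TopologicalSpace X] : Prop :=
  ∃ σ : List (Set (Set X)) → Set X,
    ∀ 𝒰 : ℕ → Set (Set X), (∀ n, IsOpenCover (𝒰 n)) →
      (∀ n, σ (hist 𝒰 n) ∈ 𝒰 n) ∧ (⋃ n, σ (hist 𝒰 n)) = univ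

/-- One has a winning strategy in the Rothberger game on `X`. -/
def RothOneWin (X : Type u) [TopologicalSpace X] : Prop :=
  ∃ σ : List (Set X) → Set (Set X), (∀ l, IsOpenCover (σ l)) ∧
    ∀ g : ℕ → Set X, (∀ n, g n ∈ σ ((List.range n).map g)) → (⋃ n, g n) ≠ univ

/-- One has a winning strategy in the point-open game on `X`. -/
def POOneWin (X : Type u) [TopologicalSpace X] : Prop :=
  ∃ σ : List (Set X) → X,
    ∀ g : ℕ → Set X, (∀ n, IsOpen (g n) ∧ σ ((List.range n).map g) ∈ g n) →
      (⋃ n, g n) = univ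

/-- Two has a winning strategy in the point-open game on `X`. -/
def POTwoWin (X : Type u) [TopologicalSpace X] : Prop :=
  ∃ σ : List X → Set X,
    ∀ x : ℕ → X, (∀ n, IsOpen (σ (hist x n)) ∧ x n ∈ σ (hist x n)) ∧
      (⋃ n, σ (hist x n)) ≠ univ

/-- The Gδ-modification of the topology of `X`. -/
def gdeltaTop (X : Type u) [TopologicalSpace X] : TopologicalSpace X :=
  generateFrom {s : Set X | IsGδ s}

def Scattered (X : Type u) [TopologicalSpace X] : Prop :=
  ∀ S : Set X, S.Nonempty → ∃ x ∈ S, ∃ U : Set X, IsOpen U ∧ U ∩ S = {x}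

/-- Alster implies S₁(𝒜, 𝒪^δ). -/
theorem alster_S1_alster_gdelta (X : Type u) [TopologicalSpace X] (h : AlsterSpace X) :
    ∀ 𝒰 : ℕ → Set (Set X), (∀ n, IsAlsterCover (𝒰 n)) →
      ∃ f : ℕ → Set X, (∀ n, f n ∈ 𝒰 n) ∧ (⋃ n, f n) = univ := by
  intro 𝒰 h𝒰
  -- each 𝒰 n is nonempty (it contains a superset of the compact ∅)
  have hne : ∀ n, ∃ A, A ∈ 𝒰 n := by
    intro n
    obtain ⟨U, hU, -⟩ := (h𝒰 n).2.2 ∅ isCompact_empty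
    exact ⟨U, hU⟩
  choose A0 hA0 using hne
  cases isEmpty_or_nonempty X with
  | inl hX =>
    refine ⟨A0, hA0, ?_⟩
    ext x; exact absurd trivial (hX.elim x)
  | inr hX =>
    -- the cover of countable intersections
    set 𝒲 : Set (Set X) :=
      {W | ∃ A : ℕ → Set X, (∀ n, A n ∈ 𝒰 n) ∧ W = ⋂ n, A n} with h𝒲
    have hAlster : IsAlsterCover 𝒲 := by
      refine ⟨?_, ?_, ?_⟩
      · rintro W ⟨A, hA, rfl⟩
        exact IsGδ.iInter fun n => (h𝒰 n).1 _ (hA n)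
      · apply Set.eq_univ_of_forall
        intro x
        have : ∀ n, ∃ U ∈ 𝒰 n, ({x} : Set X) ⊆ U := fun n =>
          (h𝒰 n).2.2 {x} isCompact_singleton
        choose A hA hAx using this
        exact ⟨⋂ n, A n, ⟨A, hA, rfl⟩, Set.mem_iInter.2 fun n => hAx n rfl⟩
      · intro K hK
        have : ∀ n, ∃ U ∈ 𝒰 n, K ⊆ U := fun n => (h𝒰 n).2.2 K hK
        choose A hA hAK using this
        exact ⟨⋂ n, A n, ⟨A, hA, rfl⟩, Set.subset_iInter hAK⟩
    obtain ⟨𝒱, h𝒱W, h𝒱c, h𝒱u⟩ := h 𝒲 hAlster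
    have h𝒱ne : 𝒱.Nonempty := by
      rcases hX with ⟨x⟩
      have : x ∈ ⋃₀ 𝒱 := h𝒱u ▸ trivial
      rcases this with ⟨V, hV, -⟩
      exact ⟨V, hV⟩
    obtain ⟨g, hg⟩ := Set.Countable.exists_eq_range h𝒱c h𝒱ne
    have hgW : ∀ k, g k ∈ 𝒲 := fun k => h𝒱W (hg ▸ Set.mem_range_self k)
    choose A hA hAg using hgW
    refine ⟨fun n => A n.unpair.1 n, fun n => hA _ n, ?_⟩
    apply Set.eq_univ_of_forall
    intro x
    have : x ∈ ⋃₀ 𝒱 := h𝒱u ▸ trivial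
    rcases this with ⟨V, hV, hxV⟩
    rw [hg] at hV
    rcases hV with ⟨k, rfl⟩
    refine Set.mem_iUnion.2 ⟨Nat.pair k 0, ?_⟩
    have hx2 : x ∈ ⋂ m, A k m := (hAg k) ▸ hxV
    have := Set.mem_iInter.1 hx2 (Nat.pair k 0)
    simpa [Nat.unpair_pair] using this
end

section
/- Every Alster space satisfies S₁(𝒦, 𝒪): for every sequence (U_n) of k-covers of X, one can choose U_n ∈ U_n such that {U_n : n ∈ ω} is an open cover of X. -/
open Set TopologicalSpace

universe u

/-- Every Alster space satisfies S₁(𝒦, 𝒪). -/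
theorem alster_S1_kcover (X : Type u) [TopologicalSpace X] (h : AlsterSpace X) :
    ∀ 𝒰 : ℕ → Set (Set X), (∀ n, IsKCover (𝒰 n)) →
      ∃ f : ℕ → Set X, (∀ n, f n ∈ 𝒰 n) ∧ (⋃ n, f n) = univ := by
  intro 𝒰 h𝒰
  have hu : ∀ n (K : Set X), ∃ U, IsCompact K → U ∈ 𝒰 n ∧ K ⊆ U := by
    intro n K
    by_cases hK : IsCompact K
    · obtain ⟨U, hU, hKU⟩ := (h𝒰 n).2.2 K hK
      exact ⟨U, fun _ => ⟨hU, hKU⟩⟩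
    · exact ⟨∅, fun h' => absurd h' hK⟩
  choose u hu using hu
  set W : Set (Set X) := {G | ∃ K, IsCompact K ∧ G = ⋂ n, u n K} with hW
  have hWA : IsAlsterCover W := by
    refine ⟨?_, ?_, ?_⟩
    · rintro G ⟨K, hK, rfl⟩
      exact .iInter fun n => ((h𝒰 n).1 _ (hu n K hK).1).isGδ
    · apply eq_univ_of_forall; intro x
      exact ⟨⋂ n, u n {x}, ⟨{x}, isCompact_singleton, rfl⟩,
        mem_iInter.2 fun n => (hu n {x} isCompact_singleton).2 rfl⟩
    · intro K hK
      exact ⟨⋂ n, u n K, ⟨K, hK, rfl⟩, subset_iInter fun n => (hu n K hK).2⟩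
  obtain ⟨𝒱, h𝒱W, h𝒱c, h𝒱u⟩ := h W hWA
  rcases 𝒱.eq_empty_or_nonempty with rfl | hne
  · refine ⟨fun n => u n ∅, fun n => (hu n ∅ isCompact_empty).1, ?_⟩
    have huniv : (univ : Set X) = ∅ := by simpa using h𝒱u.symm
    rw [huniv]
    exact eq_empty_of_subset_empty (by rw [← huniv]; exact subset_univ _)
  · obtain ⟨V, rfl⟩ := h𝒱c.exists_eq_range hne
    have hK : ∀ j, ∃ K, IsCompact K ∧ V j = ⋂ n, u n K := fun j => h𝒱W ⟨j, rfl⟩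
    choose K hKc hKV using hK
    refine ⟨fun n => u n (K n.unpair.1), fun n => (hu n _ (hKc _)).1, ?_⟩
    apply eq_univ_of_forall; intro x
    have hx : x ∈ ⋃₀ range V := h𝒱u ▸ mem_univ x
    obtain ⟨_, ⟨j, rfl⟩, hx⟩ := hx
    rw [hKV j] at hx
    refine mem_iUnion.2 ⟨Nat.pair j 0, ?_⟩
    simpa [Nat.unpair_pair] using mem_iInter.1 hx (Nat.pair j 0)
end

section
/- If Two has a winning strategy in the Menger game on a regular topological space X, then X is an Alster space. -/
open Set TopologicalSpace

universe u

namespace MengerAlsterAux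

lemma map_range_getD {α : Type u} (L : List α) (d : α) :
    (List.range L.length).map (fun n => L.getD n d) = L := by
  apply List.ext_getElem
  · simp
  · intro n h1 h2; simp [List.getElem?_eq_getElem h2]

lemma hist_succ {α : Type u} (f : ℕ → α) (n : ℕ) :
    hist f (n + 1) = hist f n ++ [f (n + 1)] := by
  simp [hist, List.range_succ]

lemma hist_zero {α : Type u} (f : ℕ → α) : hist f 0 = [f 0] := by
  simp [hist, List.range_succ]

variable {X : Type u} [TopologicalSpace X]

lemma isOpenCover_trivial : IsOpenCover ({univ} : Set (Set X)) :=
  ⟨fun U hU => by rw [mem_singleton_iff.1 hU]; exact isOpen_univ, by simp⟩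

/-- The property of being a winning strategy for Two in the Menger game. -/
def WinStrat (X : Type u) [TopologicalSpace X] (σ : List (Set (Set X)) → Set (Set X)) : Prop :=
  ∀ 𝒰 : ℕ → Set (Set X), (∀ n, IsOpenCover (𝒰 n)) →
      (∀ n, (σ (hist 𝒰 n)).Finite ∧ σ (hist 𝒰 n) ⊆ 𝒰 n) ∧
      (⋃ n, ⋃₀ σ (hist 𝒰 n)) = univ

variable {σ : List (Set (Set X)) → Set (Set X)}

/-- Response of the strategy to a finite sequence of covers is a legal (finite) move. -/
lemma resp_spec (hσ : WinStrat X σ) {p : List (Set (Set X))}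
    (hp : ∀ q ∈ p, IsOpenCover q) {𝒰 : Set (Set X)} (h𝒰 : IsOpenCover 𝒰) :
    (σ (p ++ [𝒰])).Finite ∧ σ (p ++ [𝒰]) ⊆ 𝒰 := by
  set L : List (Set (Set X)) := p ++ [𝒰] with hL
  have hLcov : ∀ q ∈ L, IsOpenCover q := by
    intro q hq
    rcases List.mem_append.1 hq with h | h
    · exact hp q h
    · rw [List.mem_singleton.1 h]; exact h𝒰
  set f : ℕ → Set (Set X) := fun n => L.getD n {univ} with hf
  have hfcov : ∀ n, IsOpenCover (f n) := by
    intro n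
    by_cases h : n < L.length
    · have : f n = L[n] := List.getD_eq_getElem L _ h
      rw [this]; exact hLcov _ (List.getElem_mem h)
    · have : f n = {univ} := List.getD_eq_default L _ (le_of_not_gt h)
      rw [this]; exact isOpenCover_trivial
  have hlen : L.length = p.length + 1 := by simp [hL]
  have hhist : hist f p.length = L := by
    rw [hist, ← hlen]
    exact map_range_getD L _
  have hlast : f p.length = 𝒰 := by
    show L.getD p.length {univ} = 𝒰
    rw [hL]
    simp [List.getD_append_right]
  have := ((hσ f hfcov).1 p.length)
  rw [hhist, hlast] at this
  exact this

/-- The compact core at position `p`. -/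
def Kc (σ : List (Set (Set X)) → Set (Set X)) (p : List (Set (Set X))) : Set X :=
  ⋂ 𝒰 ∈ {𝒰 : Set (Set X) | IsOpenCover 𝒰}, closure (⋃₀ σ (p ++ [𝒰]))

lemma mem_Kc {p : List (Set (Set X))} {x : X} :
    x ∈ Kc σ p ↔ ∀ 𝒰 : Set (Set X), IsOpenCover 𝒰 → x ∈ closure (⋃₀ σ (p ++ [𝒰])) := by
  simp [Kc]

lemma isClosed_Kc (p : List (Set (Set X))) : IsClosed (Kc σ p) :=
  isClosed_biInter fun _ _ => isClosed_closure

lemma isCompact_Kc [RegularSpace X] (hσ : WinStrat X σ) {p : List (Set (Set X))}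
    (hp : ∀ q ∈ p, IsOpenCover q) : IsCompact (Kc σ p) := by
  classical
  refine isCompact_of_finite_subcover (fun {ι} U hU hcov => ?_)
  rcases eq_empty_or_nonempty (Kc σ p) with hKe | ⟨z0, hz0⟩
  · exact ⟨∅, by simp [hKe]⟩
  have hι : Nonempty ι := by
    obtain ⟨i, _⟩ := mem_iUnion.1 (hcov hz0); exact ⟨i⟩
  have hN : ∀ z : X, ∃ N : Set X, IsOpen N ∧ z ∈ N ∧
      (closure N ∩ Kc σ p = ∅ ∨ ∃ i, closure N ⊆ U i) := by
    intro z
    by_cases hz : z ∈ Kc σ p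
    · obtain ⟨i, hi⟩ := mem_iUnion.1 (hcov hz)
      obtain ⟨t, ht, htc, hts⟩ := exists_mem_nhds_isClosed_subset ((hU i).mem_nhds hi)
      refine ⟨interior t, isOpen_interior, mem_interior_iff_mem_nhds.2 ht, Or.inr ⟨i, ?_⟩⟩
      calc closure (interior t) ⊆ closure t := closure_mono interior_subset
        _ = t := htc.closure_eq
        _ ⊆ U i := hts
    · obtain ⟨t, ht, htc, hts⟩ := exists_mem_nhds_isClosed_subset
        (((isClosed_Kc p).isOpen_compl).mem_nhds hz)
      refine ⟨interior t, isOpen_interior, mem_interior_iff_mem_nhds.2 ht, Or.inl ?_⟩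
      have hsub : closure (interior t) ⊆ (Kc σ p)ᶜ := by
        calc closure (interior t) ⊆ closure t := closure_mono interior_subset
          _ = t := htc.closure_eq
          _ ⊆ (Kc σ p)ᶜ := hts
      rw [eq_empty_iff_forall_notMem]
      rintro y ⟨hy1, hy2⟩; exact hsub hy1 hy2
  choose N hNopen hNmem hNalt using hN
  have h𝒲 : IsOpenCover (range N) := by
    constructor
    · rintro _ ⟨z, rfl⟩; exact hNopen z
    · apply eq_univ_of_forall
      intro z; exact ⟨N z, mem_range_self z, hNmem z⟩
  obtain ⟨hfin, hsub⟩ := resp_spec hσ hp h𝒲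
  have hKsub : Kc σ p ⊆ closure (⋃₀ σ (p ++ [range N])) := by
    intro w hw; exact mem_Kc.1 hw _ h𝒲
  rw [hfin.closure_sUnion] at hKsub
  have hc : ∀ g : Set X, ∃ i : ι, (∃ j, closure g ⊆ U j) → closure g ⊆ U i := by
    intro g
    by_cases h : ∃ j, closure g ⊆ U j
    · obtain ⟨j, hj⟩ := h; exact ⟨j, fun _ => hj⟩
    · exact ⟨Classical.arbitrary ι, fun hh => absurd hh h⟩
  choose c hc using hc
  refine ⟨hfin.toFinset.image c, fun w hw => ?_⟩
  obtain ⟨g, hg, hwg⟩ := mem_iUnion₂.1 (hKsub hw)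
  obtain ⟨z, rfl⟩ := hsub hg
  rcases hNalt z with hdisj | hex
  · exfalso
    have : w ∈ closure (N z) ∩ Kc σ p := ⟨hwg, hw⟩
    rw [hdisj] at this; exact this
  · refine mem_iUnion₂.2 ⟨c (N z), ?_, hc (N z) hex hwg⟩
    exact Finset.mem_image.2 ⟨N z, hfin.mem_toFinset.2 hg, rfl⟩

/-- Lindelöf property from the winning strategy. -/
lemma lindelof (hσ : WinStrat X σ) (𝒞 : Set (Set X)) (h𝒞 : IsOpenCover 𝒞) :
    ∃ T ⊆ 𝒞, T.Countable ∧ ⋃₀ T = univ := by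
  obtain ⟨h1, h2⟩ := hσ (fun _ => 𝒞) (fun _ => h𝒞)
  refine ⟨⋃ n, σ (hist (fun _ => 𝒞) n), iUnion_subset fun n => (h1 n).2,
    countable_iUnion fun n => (h1 n).1.countable, ?_⟩
  rw [sUnion_iUnion]; exact h2

/-- Countably many covers forcing avoidance of any open `V ⊇ Kc σ p`. -/
lemma forcing (hσ : WinStrat X σ) {p : List (Set (Set X))}
    (hp : ∀ q ∈ p, IsOpenCover q) {V : Set X} (hVopen : IsOpen V) (hKV : Kc σ p ⊆ V) :
    ∃ f : ℕ → Set (Set X), (∀ k, IsOpenCover (f k)) ∧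
      ∀ x ∉ V, ∃ k, x ∉ closure (⋃₀ σ (p ++ [f k])) := by
  classical
  set 𝒞 : Set (Set X) :=
    insert V {W | ∃ 𝒰, _root_.IsOpenCover 𝒰 ∧ W = (closure (⋃₀ σ (p ++ [𝒰])))ᶜ} with h𝒞def
  have h𝒞 : IsOpenCover 𝒞 := by
    constructor
    · rintro W hW
      rcases hW with rfl | ⟨𝒰, -, rfl⟩
      · exact hVopen
      · exact isClosed_closure.isOpen_compl
    · apply eq_univ_of_forall
      intro x
      by_cases hx : x ∈ V
      · exact ⟨V, mem_insert _ _, hx⟩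
      · have hxK : x ∉ Kc σ p := fun hh => hx (hKV hh)
        rw [mem_Kc] at hxK
        push_neg at hxK
        obtain ⟨𝒰, h𝒰, hcl⟩ := hxK
        exact ⟨(closure (⋃₀ σ (p ++ [𝒰])))ᶜ, Or.inr ⟨𝒰, h𝒰, rfl⟩, hcl⟩
  obtain ⟨T, hT𝒞, hTc, hTu⟩ := lindelof hσ 𝒞 h𝒞
  have hw : ∀ W : Set X, ∃ 𝒰, _root_.IsOpenCover 𝒰 ∧
      ((∃ 𝒰', _root_.IsOpenCover 𝒰' ∧ W = (closure (⋃₀ σ (p ++ [𝒰'])))ᶜ) →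
        W = (closure (⋃₀ σ (p ++ [𝒰])))ᶜ) := by
    intro W
    by_cases h : ∃ 𝒰', _root_.IsOpenCover 𝒰' ∧ W = (closure (⋃₀ σ (p ++ [𝒰'])))ᶜ
    · obtain ⟨𝒰', h1, h2⟩ := h; exact ⟨𝒰', h1, fun _ => h2⟩
    · exact ⟨{univ}, isOpenCover_trivial, fun hh => absurd hh h⟩
  choose w hw1 hw2 using hw
  rcases eq_empty_or_nonempty T with rfl | hTne
  · refine ⟨fun _ => {univ}, fun _ => isOpenCover_trivial, fun x hx => ?_⟩
    exfalso
    have : x ∈ ⋃₀ (∅ : Set (Set X)) := hTu ▸ mem_univ x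
    simp at this
  obtain ⟨e, he⟩ := hTc.exists_eq_range hTne
  refine ⟨fun k => w (e k), fun k => hw1 _, fun x hx => ?_⟩
  have hxT : x ∈ ⋃₀ T := hTu ▸ mem_univ x
  obtain ⟨W, hWT, hxW⟩ := hxT
  rcases hT𝒞 hWT with rfl | hWc
  · exact absurd hxW hx
  · have hkW : ∃ k, e k = W := by
      have : W ∈ range e := he ▸ hWT
      exact this
    obtain ⟨k, rfl⟩ := hkW
    refine ⟨k, ?_⟩
    have heq := hw2 (e k) hWc
    rw [heq] at hxW
    exact hxW

end MengerAlsterAux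

namespace MengerAlsterAux

/-- Positions in the game tree: `posAux child s` is the list of covers played by One along the
reversed path `s`. -/
def posAux {α : Type u} (child : List α → ℕ → α) : List ℕ → List α
  | [] => []
  | m :: s => posAux child s ++ [child (posAux child s) m]

end MengerAlsterAux


open MengerAlsterAux

/-- Two winning the Menger game on a regular space implies Alster. -/
theorem mengerTwoWin_alster (X : Type u) [TopologicalSpace X] [RegularSpace X]
    (h : MengerTwoWin X) : AlsterSpace X := by
  classical
  obtain ⟨σ, hσ⟩ := h
  have hσ' : WinStrat X σ := hσ
  intro 𝒜 h𝒜
  obtain ⟨hGδ, hcov, hcomp⟩ := h𝒜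
  -- choose an Alster-cover member containing each compact core
  have hAex : ∀ p : List (Set (Set X)), ∃ A : Set X,
      (∀ q ∈ p, IsOpenCover q) → A ∈ 𝒜 ∧ Kc σ p ⊆ A := by
    intro p
    by_cases hp : ∀ q ∈ p, IsOpenCover q
    · obtain ⟨A, hA1, hA2⟩ := hcomp _ (isCompact_Kc hσ' hp)
      exact ⟨A, fun _ => ⟨hA1, hA2⟩⟩
    · exact ⟨univ, fun hh => absurd hh hp⟩
  choose A hA using hAex
  -- Gδ decompositions
  have hBex : ∀ p : List (Set (Set X)), ∃ B : ℕ → Set X, (∀ n, IsOpen (B n)) ∧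
      ((∀ q ∈ p, IsOpenCover q) → A p = ⋂ n, B n) := by
    intro p
    by_cases hp : ∀ q ∈ p, IsOpenCover q
    · obtain ⟨B, hB1, hB2⟩ := (hGδ _ (hA p hp).1).eq_iInter_nat
      exact ⟨B, hB1, fun _ => hB2⟩
    · exact ⟨fun _ => univ, fun _ => isOpen_univ, fun hh => absurd hh hp⟩
  choose B hBopen hBeq using hBex
  -- forcing families
  have hFex : ∀ (p : List (Set (Set X))) (n : ℕ), ∃ f : ℕ → Set (Set X),
      (∀ k, IsOpenCover (f k)) ∧
      ((∀ q ∈ p, IsOpenCover q) → ∀ x ∉ B p n, ∃ k, x ∉ closure (⋃₀ σ (p ++ [f k]))) := by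
    intro p n
    by_cases hp : ∀ q ∈ p, IsOpenCover q
    · have hKB : Kc σ p ⊆ B p n := by
        intro y hy
        have h1 := (hA p hp).2 hy
        rw [hBeq p hp] at h1
        exact mem_iInter.1 h1 n
      obtain ⟨f, hf1, hf2⟩ := forcing hσ' hp (hBopen p n) hKB
      exact ⟨f, hf1, fun _ => hf2⟩
    · exact ⟨fun _ => {univ}, fun _ => isOpenCover_trivial, fun hh => absurd hh hp⟩
  choose F hFcov hF using hFex
  set child : List (Set (Set X)) → ℕ → Set (Set X) :=
    fun p m => F p m.unpair.1 m.unpair.2 with hchild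
  -- every position along the tree consists of open covers
  have hposcov : ∀ s : List ℕ, ∀ q ∈ posAux child s, IsOpenCover q := by
    intro s
    induction s with
    | nil => simp [posAux]
    | cons m s ih =>
      intro q hq
      rw [posAux] at hq
      rcases List.mem_append.1 hq with h1 | h1
      · exact ih q h1
      · rw [List.mem_singleton.1 h1]; exact hFcov _ _ _
  refine ⟨range (fun s : List ℕ => A (posAux child s)), ?_, countable_range _, ?_⟩
  · rintro _ ⟨s, rfl⟩; exact (hA _ (hposcov s)).1
  · by_contra hne
    have hxex : ∃ x : X, ∀ s : List ℕ, x ∉ A (posAux child s) := by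
      by_contra h'
      push_neg at h'
      apply hne
      apply eq_univ_of_forall
      intro x
      obtain ⟨s, hs⟩ := h' x
      exact ⟨A (posAux child s), ⟨s, rfl⟩, hs⟩
    obtain ⟨x, hx⟩ := hxex
    have step : ∀ s : List ℕ, ∃ m : ℕ,
        x ∉ closure (⋃₀ σ (posAux child s ++ [child (posAux child s) m])) := by
      intro s
      have h1 := hx s
      rw [hBeq _ (hposcov s)] at h1
      rw [mem_iInter] at h1
      push_neg at h1
      obtain ⟨n, hn⟩ := h1
      obtain ⟨k, hk⟩ := hF _ n (hposcov s) x hn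
      refine ⟨Nat.pair n k, ?_⟩
      rw [hchild]
      simpa [Nat.unpair_pair] using hk
    choose nxt hnxt using step
    set branch : ℕ → List ℕ := fun j => Nat.rec [] (fun _ s => nxt s :: s) j with hbr
    set 𝒰 : ℕ → Set (Set X) :=
      fun j => child (posAux child (branch j)) (nxt (branch j)) with h𝒰
    have hbranch : ∀ j, branch (j + 1) = nxt (branch j) :: branch j := fun j => rfl
    have hposbr : ∀ j, posAux child (branch (j + 1)) =
        posAux child (branch j) ++ [𝒰 j] := by
      intro j
      rw [hbranch j]
      rfl
    have hpos : ∀ j, hist 𝒰 j = posAux child (branch (j + 1)) := by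
      intro j
      induction j with
      | zero =>
        rw [hist_zero, hposbr 0]
        rfl
      | succ j ih =>
        rw [hist_succ, ih, hposbr (j + 1)]
    have hcovseq : ∀ j, IsOpenCover (𝒰 j) := fun j => hFcov _ _ _
    obtain ⟨-, hwin⟩ := hσ' 𝒰 hcovseq
    have hxu : x ∈ ⋃ n, ⋃₀ σ (hist 𝒰 n) := hwin ▸ mem_univ x
    obtain ⟨j, hj⟩ := mem_iUnion.1 hxu
    apply hnxt (branch j)
    apply subset_closure
    rw [← hposbr j, ← hpos j]
    exact hj
end

section
/- If Two has a winning strategy in the Rothberger game on a topological space X, then the Gδ-modification X_δ of X is a Lindelöf space. -/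
open Set TopologicalSpace

universe u

section AuxRothGdelta

variable {X : Type u} [TopologicalSpace X]

lemma hist_eval (𝒰 : ℕ → Set (Set X)) (n : ℕ) :
    hist 𝒰 n = (List.range n).map 𝒰 ++ [𝒰 n] := by
  simp [hist, List.range_succ]

lemma key_lemma (σ : List (Set (Set X)) → Set X)
    (hσ : ∀ 𝒰 : ℕ → Set (Set X), (∀ n, IsOpenCover (𝒰 n)) →
      (∀ n, σ (hist 𝒰 n) ∈ 𝒰 n) ∧ (⋃ n, σ (hist 𝒰 n)) = univ)
    (h : List (Set (Set X))) (hh : ∀ 𝒞 ∈ h, IsOpenCover 𝒞) :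
    ∃ x : X, ∀ V : Set X, IsOpen V → x ∈ V →
      ∃ 𝒰 : Set (Set X), IsOpenCover 𝒰 ∧ σ (h ++ [𝒰]) ⊆ V := by
  by_contra hcon
  push_neg at hcon
  choose V hVopen hVmem hVnot using hcon
  set 𝒰S : Set (Set X) := range V with h𝒰S
  have hcovS : IsOpenCover 𝒰S := by
    constructor
    · rintro _ ⟨x, rfl⟩; exact hVopen x
    · rw [sUnion_eq_univ_iff]; exact fun x => ⟨V x, mem_range_self x, hVmem x⟩
  set 𝒰 : ℕ → Set (Set X) := fun n => if hn : n < h.length then h[n] else 𝒰S with h𝒰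
  have hall : ∀ n, IsOpenCover (𝒰 n) := by
    intro n
    by_cases hn : n < h.length
    · simpa [h𝒰, hn] using hh _ (h.getElem_mem hn)
    · simpa [h𝒰, hn] using hcovS
  have h0 : 𝒰 h.length = 𝒰S := dif_neg (lt_irrefl _)
  have hhist : hist 𝒰 h.length = h ++ [𝒰S] := by
    rw [hist_eval]
    congr 1
    · apply List.ext_getElem
      · simp
      · intro i h1 h2
        simp only [List.getElem_map, List.getElem_range]
        exact dif_pos h2
    · rw [h0]
  obtain ⟨hmem, -⟩ := hσ 𝒰 hall
  have h1 := hmem h.length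
  rw [hhist, h0] at h1
  obtain ⟨x0, hx0⟩ := h1
  exact hVnot x0 𝒰S hcovS (hx0.ge)

lemma step_lemma (σ : List (Set (Set X)) → Set X)
    (hσ : ∀ 𝒰 : ℕ → Set (Set X), (∀ n, IsOpenCover (𝒰 n)) →
      (∀ n, σ (hist 𝒰 n) ∈ 𝒰 n) ∧ (⋃ n, σ (hist 𝒰 n)) = univ)
    (𝒢 : Set (Set X)) (h𝒢 : ∀ G ∈ 𝒢, IsGδ G) (hcov : ⋃₀ 𝒢 = univ)
    (h : List (Set (Set X))) :
    ∃ (G : Set X) (𝒰 : ℕ → Set (Set X)),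
      (∀ 𝒞 ∈ h, IsOpenCover 𝒞) →
        G ∈ 𝒢 ∧ (∀ n, IsOpenCover (𝒰 n)) ∧
          ∀ x : X, (∀ n, x ∈ σ (h ++ [𝒰 n])) → x ∈ G := by
  by_cases hh : ∀ 𝒞 ∈ h, IsOpenCover 𝒞
  · obtain ⟨x, hx⟩ := key_lemma σ hσ h hh
    have hxG : x ∈ ⋃₀ 𝒢 := hcov ▸ mem_univ x
    obtain ⟨G, hG, hxmem⟩ := hxG
    obtain ⟨f, hfo, hfG⟩ := (h𝒢 G hG).eq_iInter_nat
    have hxf : ∀ n, x ∈ f n := by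
      rw [hfG] at hxmem; exact fun n => mem_iInter.mp hxmem n
    choose 𝒰 h𝒰c h𝒰s using fun n => hx (f n) (hfo n) (hxf n)
    refine ⟨G, 𝒰, fun _ => ⟨hG, h𝒰c, fun y hy => ?_⟩⟩
    rw [hfG]
    exact mem_iInter.mpr fun n => h𝒰s n (hy n)
  · exact ⟨∅, fun _ => {univ}, fun hcontra => absurd hcontra hh⟩

lemma gdelta_cover_countable_subcover (σ : List (Set (Set X)) → Set X)
    (hσ : ∀ 𝒰 : ℕ → Set (Set X), (∀ n, IsOpenCover (𝒰 n)) →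
      (∀ n, σ (hist 𝒰 n) ∈ 𝒰 n) ∧ (⋃ n, σ (hist 𝒰 n)) = univ)
    (𝒢 : Set (Set X)) (h𝒢 : ∀ G ∈ 𝒢, IsGδ G) (hcov : ⋃₀ 𝒢 = univ) :
    ∃ 𝒱 ⊆ 𝒢, 𝒱.Countable ∧ ⋃₀ 𝒱 = univ := by
  choose Gof Uof hGU using fun h => step_lemma σ hσ 𝒢 h𝒢 hcov h
  let H : List ℕ → List (Set (Set X)) := fun s =>
    List.rec [] (fun n _ ih => ih ++ [Uof ih n]) s
  have Hnil : H [] = [] := rfl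
  have Hcons : ∀ (n : ℕ) (s : List ℕ), H (n :: s) = H s ++ [Uof (H s) n] :=
    fun _ _ => rfl
  have hH : ∀ s : List ℕ, ∀ 𝒞 ∈ H s, IsOpenCover 𝒞 := by
    intro s
    induction s with
    | nil => intro 𝒞 h𝒞; rw [Hnil] at h𝒞; exact absurd h𝒞 List.not_mem_nil
    | cons n s ih =>
      intro 𝒞 h𝒞
      rw [Hcons] at h𝒞
      rcases List.mem_append.mp h𝒞 with h1 | h2
      · exact ih 𝒞 h1
      · rw [List.mem_singleton] at h2
        subst h2
        exact (hGU (H s) ih).2.1 n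
  refine ⟨range (fun s : List ℕ => Gof (H s)), ?_, countable_range _, ?_⟩
  · rintro _ ⟨s, rfl⟩; exact (hGU (H s) (hH s)).1
  · rw [sUnion_eq_univ_iff]
    intro x
    by_contra hx
    push_neg at hx
    have hx' : ∀ s : List ℕ, x ∉ Gof (H s) := fun s => hx _ (mem_range_self s)
    have hex : ∀ s : List ℕ, ∃ n, x ∉ σ (H s ++ [Uof (H s) n]) := by
      intro s
      by_contra hc
      push_neg at hc
      exact hx' s ((hGU (H s) (hH s)).2.2 x hc)
    choose nsel hnsel using hex
    let b : ℕ → List ℕ := fun k => Nat.rec [] (fun _ ih => nsel ih :: ih) k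
    have hb : ∀ k, b (k + 1) = nsel (b k) :: b k := fun _ => rfl
    let 𝒰 : ℕ → Set (Set X) := fun k => Uof (H (b k)) (nsel (b k))
    have hHb : ∀ k, H (b k) = (List.range k).map 𝒰 := by
      intro k
      induction k with
      | zero => rfl
      | succ k ih => rw [hb, Hcons, List.range_succ, List.map_append, ← ih]; rfl
    have hallc : ∀ k, IsOpenCover (𝒰 k) := fun k => (hGU (H (b k)) (hH _)).2.1 _
    obtain ⟨-, hwin⟩ := hσ 𝒰 hallc
    have hxin : x ∈ ⋃ n, σ (hist 𝒰 n) := hwin ▸ mem_univ x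
    obtain ⟨k, hk⟩ := mem_iUnion.mp hxin
    have heq : hist 𝒰 k = H (b k) ++ [𝒰 k] := by
      rw [hist_eval, hHb k]
    rw [heq] at hk
    exact hnsel (b k) hk


end AuxRothGdelta

/-- Two winning the Rothberger game implies the Gδ-modification is Lindelöf. -/
theorem rothTwoWin_gdelta_lindelof (X : Type u) [TopologicalSpace X] (h : RothTwoWin X) :
    @LindelofSpace X (gdeltaTop X) := by
  obtain ⟨σ, hσ⟩ := h
  refine @LindelofSpace.mk X (gdeltaTop X) ?_
  rw [@isLindelof_iff_countable_subcover X (gdeltaTop X) univ]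
  intro ι U hUo hUc
  rcases isEmpty_or_nonempty ι with hι | hι
  · refine ⟨∅, countable_empty, fun x hx => absurd (hUc hx) (by simp)⟩
  have hB := @TopologicalSpace.isTopologicalBasis_of_subbasis X (gdeltaTop X)
    {s : Set X | IsGδ s} rfl
  set 𝒢 : Set (Set X) := {G | IsGδ G ∧ ∃ i, G ⊆ U i} with h𝒢def
  have h𝒢 : ∀ G ∈ 𝒢, IsGδ G := fun G hG => hG.1
  have hcov : ⋃₀ 𝒢 = univ := by
    rw [sUnion_eq_univ_iff]
    intro x
    obtain ⟨i, hi⟩ := mem_iUnion.mp (hUc (mem_univ x))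
    obtain ⟨G, hGB, hxG, hGU⟩ := @TopologicalSpace.IsTopologicalBasis.exists_subset_of_mem_open X (gdeltaTop X) _ hB _ _ hi (hUo i)
    obtain ⟨f, ⟨hffin, hfsub⟩, rfl⟩ := hGB
    exact ⟨⋂₀ f, ⟨IsGδ.sInter (fun s hs => hfsub hs) hffin.countable, i, hGU⟩, hxG⟩
  obtain ⟨𝒱, h𝒱sub, h𝒱c, h𝒱cov⟩ := gdelta_cover_countable_subcover σ hσ 𝒢 h𝒢 hcov
  have hch : ∀ G ∈ 𝒱, ∃ i, G ⊆ U i := fun G hG => (h𝒱sub hG).2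
  choose! isel hisel using hch
  refine ⟨isel '' 𝒱, h𝒱c.image _, ?_⟩
  intro x _
  have hx : x ∈ ⋃₀ 𝒱 := h𝒱cov ▸ mem_univ x
  obtain ⟨G, hG𝒱, hxG⟩ := hx
  exact mem_iUnion₂.mpr ⟨isel G, mem_image_of_mem _ hG𝒱, hisel G hG𝒱 hxG⟩
end

section
/- The Rothberger game and the point-open game are dual: One has a winning strategy in the Rothberger game on X if and only if Two has a winning strategy in the point-open game on X, and Two has a winning strategy in the Rothberger game on X if and only if One has a winning strategy in the point-open game on X. -/
open Set TopologicalSpace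

universe u

namespace GalvinDual

variable {X : Type u} [TopologicalSpace X]

attribute [local instance] Classical.propDecidable

/- ### generic helpers -/

lemma mapGetD {α : Type u} (l : List α) (d : α) :
    (List.range l.length).map (fun i => l.getD i d) = l := by
  induction l with
  | nil => simp
  | cons a t ih =>
    rw [List.length_cons, List.range_succ_eq_map, List.map_cons, List.map_map]
    have h : ((fun i => (a :: t).getD i d) ∘ Nat.succ) = fun i => t.getD i d := by
      funext i; simp [List.getD_cons_succ]
    rw [h, ih]
    simp

lemma hist_snoc {α : Type u} (f : ℕ → α) (n : ℕ) :
    hist f n = (List.range n).map f ++ [f n] := by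
  simp [hist, List.range_succ]

lemma hist_rev {α : Type u} (f : ℕ → α) (n : ℕ) :
    (hist f n).reverse = f n :: ((List.range n).map f).reverse := by
  rw [hist_snoc]; simp

lemma getD_concat_length {α : Type u} (l : List α) (a d : α) :
    (l ++ [a]).getD l.length d = a := by
  have h : l.length < (l ++ [a]).length := by simp
  rw [List.getD_eq_getElem _ d h]
  simp

lemma range_map_snoc {α : Type u} (f : ℕ → α) (n : ℕ) :
    (List.range (n + 1)).map f = (List.range n).map f ++ [f n] := by
  simp [List.range_succ]

lemma range_map_rev {α : Type u} (f : ℕ → α) (n : ℕ) :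
    ((List.range (n + 1)).map f).reverse = f n :: ((List.range n).map f).reverse := by
  rw [range_map_snoc]; simp

lemma cover_mem {𝒰 : Set (Set X)} (h : IsOpenCover 𝒰) (x : X) : ∃ U, U ∈ 𝒰 ∧ x ∈ U := by
  have := h.2
  rw [Set.sUnion_eq_univ_iff] at this
  obtain ⟨U, hU, hx⟩ := this x
  exact ⟨U, hU, hx⟩

lemma univCover : IsOpenCover ({univ} : Set (Set X)) := by
  constructor
  · rintro U rfl; exact isOpen_univ
  · simp

/- ### Direction B: RothOneWin → POTwoWin -/

noncomputable def pickB (σ : List (Set X) → Set (Set X)) (r : List (Set X)) (x : X) : Set X :=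
  if h : ∃ U, U ∈ σ r ∧ x ∈ U then h.choose else ∅

noncomputable def auxB (σ : List (Set X) → Set (Set X)) : List X → List (Set X)
  | [] => []
  | x :: t => auxB σ t ++ [pickB σ (auxB σ t) x]

noncomputable def tauB (σ : List (Set X) → Set (Set X)) (l : List X) : Set X :=
  match l.reverse with
  | [] => ∅
  | x :: t => pickB σ (auxB σ t) x

lemma dirB (h1 : RothOneWin X) : POTwoWin X := by
  obtain ⟨σ, hcov, hwin⟩ := h1
  refine ⟨tauB σ, fun x => ?_⟩
  set g : ℕ → Set X := fun n => tauB σ (hist x n) with hgdef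
  have hg : ∀ n, g n = pickB σ (auxB σ (((List.range n).map x).reverse)) (x n) := by
    intro n
    show tauB σ (hist x n) = _
    rw [tauB, hist_rev]
  have hA : ∀ n, auxB σ (((List.range n).map x).reverse) = (List.range n).map g := by
    intro n
    induction n with
    | zero => simp [auxB]
    | succ n ih =>
      have hgn : g n = pickB σ ((List.range n).map g) (x n) := by rw [hg n, ih]
      rw [range_map_rev, auxB, ih, range_map_snoc, ← hgn]
  have hkey : ∀ n, g n ∈ σ ((List.range n).map g) ∧ x n ∈ g n := by
    intro n
    have hx : ∃ U, U ∈ σ ((List.range n).map g) ∧ x n ∈ U :=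
      cover_mem (hcov _) (x n)
    have : g n = pickB σ ((List.range n).map g) (x n) := by rw [hg n, hA n]
    rw [this]
    simp only [pickB]
    rw [dif_pos hx]
    exact hx.choose_spec
  constructor
  · intro n
    refine ⟨(hcov ((List.range n).map g)).1 _ (hkey n).1, (hkey n).2⟩
  · exact hwin g (fun n => (hkey n).1)

/- ### Direction A: POTwoWin → RothOneWin -/

noncomputable def pickA [Nonempty X] (τ : List X → Set X) (q : List X) (U : Set X) : X :=
  if h : ∃ x, τ (q ++ [x]) = U then h.choose else Classical.arbitrary X

noncomputable def ptsA [Nonempty X] (τ : List X → Set X) : List (Set X) → List X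
  | [] => []
  | U :: t => ptsA τ t ++ [pickA τ (ptsA τ t) U]

noncomputable def stratA [Nonempty X] (τ : List X → Set X) (l : List (Set X)) : Set (Set X) :=
  Set.range (fun x : X => τ (ptsA τ l.reverse ++ [x]))

lemma dirA [Nonempty X] (h2 : POTwoWin X) : RothOneWin X := by
  obtain ⟨τ, hτ⟩ := h2
  have legal : ∀ (q : List X) (x : X), IsOpen (τ (q ++ [x])) ∧ x ∈ τ (q ++ [x]) := by
    intro q x
    set y : ℕ → X := fun i => (q ++ [x]).getD i x with hy
    have hlen : (q ++ [x]).length = q.length + 1 := by simp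
    have hh : hist y q.length = q ++ [x] := by
      rw [hist]
      have := mapGetD (q ++ [x]) x
      rw [hlen] at this
      exact this
    have hyl : y q.length = x := getD_concat_length q x x
    have := (hτ y).1 q.length
    rw [hh, hyl] at this
    exact this
  refine ⟨stratA τ, fun l => ?_, ?_⟩
  · constructor
    · rintro U ⟨x, rfl⟩
      exact (legal _ x).1
    · rw [Set.sUnion_eq_univ_iff]
      intro x
      exact ⟨_, ⟨x, rfl⟩, (legal _ x).2⟩
  · intro g hg
    set x : ℕ → X := fun n => pickA τ (ptsA τ (((List.range n).map g).reverse)) (g n) with hx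
    have hA : ∀ n, ptsA τ (((List.range n).map g).reverse) = (List.range n).map x := by
      intro n
      induction n with
      | zero => simp [ptsA]
      | succ n ih =>
        have hxn : x n = pickA τ ((List.range n).map x) (g n) := by
          show pickA τ (ptsA τ (((List.range n).map g).reverse)) (g n) = _
          rw [ih]
        rw [range_map_rev, ptsA, ih, range_map_snoc, ← hxn]
    have hkey : ∀ n, τ (hist x n) = g n := by
      intro n
      have hmem := hg n
      rw [stratA] at hmem
      obtain ⟨y, hy⟩ := hmem
      have hex : ∃ z, τ (ptsA τ (((List.range n).map g).reverse) ++ [z]) = g n := ⟨y, hy⟩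
      have hxn : x n = hex.choose := by
        show pickA τ (ptsA τ (((List.range n).map g).reverse)) (g n) = _
        simp only [pickA]
        rw [dif_pos hex]
      rw [hist_snoc, ← hA n, hxn]
      exact hex.choose_spec
    have h2 := (hτ x).2
    intro hcon
    apply h2
    rw [← hcon]
    exact Set.iUnion_congr hkey

/- ### Direction C: POOneWin → RothTwoWin -/

noncomputable def pickC (τ : List (Set X) → X) (r : List (Set X)) (𝒰 : Set (Set X)) : Set X :=
  if h : ∃ U, U ∈ 𝒰 ∧ τ r ∈ U then h.choose else ∅

noncomputable def auxC (τ : List (Set X) → X) : List (Set (Set X)) → List (Set X)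
  | [] => []
  | 𝒰 :: t => auxC τ t ++ [pickC τ (auxC τ t) 𝒰]

noncomputable def stratC (τ : List (Set X) → X) (l : List (Set (Set X))) : Set X :=
  match l.reverse with
  | [] => ∅
  | 𝒰 :: t => pickC τ (auxC τ t) 𝒰

lemma dirC (h3 : POOneWin X) : RothTwoWin X := by
  obtain ⟨τ, hτ⟩ := h3
  refine ⟨stratC τ, fun 𝒰 hcov => ?_⟩
  set g : ℕ → Set X := fun n => stratC τ (hist 𝒰 n) with hgdef
  have hg : ∀ n, g n = pickC τ (auxC τ (((List.range n).map 𝒰).reverse)) (𝒰 n) := by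
    intro n
    show stratC τ (hist 𝒰 n) = _
    rw [stratC, hist_rev]
  have hA : ∀ n, auxC τ (((List.range n).map 𝒰).reverse) = (List.range n).map g := by
    intro n
    induction n with
    | zero => simp [auxC]
    | succ n ih =>
      have hgn : g n = pickC τ ((List.range n).map g) (𝒰 n) := by rw [hg n, ih]
      rw [range_map_rev, auxC, ih, range_map_snoc, ← hgn]
  have hkey : ∀ n, g n ∈ 𝒰 n ∧ τ ((List.range n).map g) ∈ g n := by
    intro n
    have hx : ∃ U, U ∈ 𝒰 n ∧ τ ((List.range n).map g) ∈ U :=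
      cover_mem (hcov n) _
    have hgn : g n = pickC τ ((List.range n).map g) (𝒰 n) := by rw [hg n, hA n]
    rw [hgn]
    simp only [pickC]
    rw [dif_pos hx]
    exact hx.choose_spec
  refine ⟨fun n => (hkey n).1, ?_⟩
  exact hτ g (fun n => ⟨(hcov n).1 _ (hkey n).1, (hkey n).2⟩)

/- ### Direction D: RothTwoWin → POOneWin -/

/-- Two's Rothberger selection on any finite history of open covers is a member of the
last cover. -/
lemma memLast (σ : List (Set (Set X)) → Set X)
    (hσ : ∀ 𝒰 : ℕ → Set (Set X), (∀ n, IsOpenCover (𝒰 n)) →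
      (∀ n, σ (hist 𝒰 n) ∈ 𝒰 n) ∧ (⋃ n, σ (hist 𝒰 n)) = univ)
    (h : List (Set (Set X))) (hh : ∀ 𝒱 ∈ h, IsOpenCover 𝒱)
    {𝒲 : Set (Set X)} (hW : IsOpenCover 𝒲) :
    σ (h ++ [𝒲]) ∈ 𝒲 := by
  set L : List (Set (Set X)) := h ++ [𝒲] with hL
  set 𝒰 : ℕ → Set (Set X) := fun i => L.getD i {univ} with h𝒰
  have hcov : ∀ n, IsOpenCover (𝒰 n) := by
    intro n
    by_cases hn : n < L.length
    · have : 𝒰 n = L[n] := List.getD_eq_getElem L _ hn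
      rw [this]
      have hmem : L[n] ∈ h ++ [𝒲] := List.getElem_mem hn
      rcases List.mem_append.1 hmem with h1 | h1
      · exact hh _ h1
      · rw [List.mem_singleton] at h1
        rw [h1]; exact hW
    · have : 𝒰 n = {univ} := List.getD_eq_default L _ (Nat.le_of_not_lt hn)
      rw [this]; exact univCover
  have hlen : L.length = h.length + 1 := by simp [hL]
  have hhist : hist 𝒰 h.length = L := by
    rw [hist]
    have := mapGetD L ({univ} : Set (Set X))
    rw [hlen] at this
    exact this
  have hlast : 𝒰 h.length = 𝒲 := getD_concat_length h 𝒲 {univ}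
  have := (hσ 𝒰 hcov).1 h.length
  rw [hhist, hlast] at this
  exact this

lemma keyD [Nonempty X] (σ : List (Set (Set X)) → Set X)
    (hσ : ∀ 𝒰 : ℕ → Set (Set X), (∀ n, IsOpenCover (𝒰 n)) →
      (∀ n, σ (hist 𝒰 n) ∈ 𝒰 n) ∧ (⋃ n, σ (hist 𝒰 n)) = univ)
    (h : List (Set (Set X))) (hh : ∀ 𝒱 ∈ h, IsOpenCover 𝒱) :
    ∃ x : X, ∀ U : Set X, IsOpen U → x ∈ U →
      ∃ 𝒰, _root_.IsOpenCover 𝒰 ∧ σ (h ++ [𝒰]) ⊆ U := by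
  by_contra hcon
  push_neg at hcon
  set 𝒲 : Set (Set X) :=
    {U | IsOpen U ∧ ∀ 𝒰, _root_.IsOpenCover 𝒰 → ¬ σ (h ++ [𝒰]) ⊆ U} with h𝒲
  have hW : IsOpenCover 𝒲 := by
    constructor
    · exact fun U hU => hU.1
    · rw [Set.sUnion_eq_univ_iff]
      intro x
      obtain ⟨U, hUo, hxU, hP⟩ := hcon x
      exact ⟨U, ⟨hUo, hP⟩, hxU⟩
  have hmem := memLast σ hσ h hh hW
  exact hmem.2 𝒲 hW (subset_refl _)

noncomputable def ptD [Nonempty X] (σ : List (Set (Set X)) → Set X)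
    (h : List (Set (Set X))) : X :=
  if hc : ∃ x : X, ∀ U : Set X, IsOpen U → x ∈ U →
      ∃ 𝒰, _root_.IsOpenCover 𝒰 ∧ σ (h ++ [𝒰]) ⊆ U then hc.choose
  else Classical.arbitrary X

noncomputable def nxtD (σ : List (Set (Set X)) → Set X)
    (h : List (Set (Set X))) (U : Set X) : Set (Set X) :=
  if hc : ∃ 𝒰, _root_.IsOpenCover 𝒰 ∧ σ (h ++ [𝒰]) ⊆ U then hc.choose else {univ}

noncomputable def covsD (σ : List (Set (Set X)) → Set X) : List (Set X) → List (Set (Set X))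
  | [] => []
  | U :: t => covsD σ t ++ [nxtD σ (covsD σ t) U]

noncomputable def stratD [Nonempty X] (σ : List (Set (Set X)) → Set X)
    (l : List (Set X)) : X :=
  ptD σ (covsD σ l.reverse)

lemma nxtD_cover (σ : List (Set (Set X)) → Set X) (h : List (Set (Set X))) (U : Set X) :
    IsOpenCover (nxtD σ h U) := by
  rw [nxtD]
  split
  · next hc => exact hc.choose_spec.1
  · exact univCover

lemma covsD_cover (σ : List (Set (Set X)) → Set X) (l : List (Set X)) :
    ∀ 𝒱 ∈ covsD σ l, IsOpenCover 𝒱 := by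
  induction l with
  | nil => intro 𝒱 h; simp [covsD] at h
  | cons U t ih =>
    intro 𝒱 h
    rw [covsD] at h
    rcases List.mem_append.1 h with h1 | h1
    · exact ih _ h1
    · rw [List.mem_singleton] at h1
      rw [h1]; exact nxtD_cover σ _ _

lemma dirD [Nonempty X] (h4 : RothTwoWin X) : POOneWin X := by
  obtain ⟨σ, hσ⟩ := h4
  refine ⟨stratD σ, fun g hg => ?_⟩
  set C : ℕ → List (Set (Set X)) := fun n => covsD σ (((List.range n).map g).reverse) with hC
  set 𝒰 : ℕ → Set (Set X) := fun n => nxtD σ (C n) (g n) with h𝒰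
  have hCsucc : ∀ n, C (n + 1) = C n ++ [𝒰 n] := by
    intro n
    show covsD σ (((List.range (n+1)).map g).reverse) = _
    rw [range_map_rev, covsD]
  have hA : ∀ n, C n = (List.range n).map 𝒰 := by
    intro n
    induction n with
    | zero => simp [hC, covsD]
    | succ n ih =>
      rw [hCsucc n, ih, range_map_snoc]
  have hcovs : ∀ n, IsOpenCover (𝒰 n) := fun n => nxtD_cover σ _ _
  have hhist : ∀ n, hist 𝒰 n = C n ++ [𝒰 n] := by
    intro n
    rw [hist_snoc, hA n]
  have hsub : ∀ n, σ (hist 𝒰 n) ⊆ g n := by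
    intro n
    have hCcov : ∀ 𝒱 ∈ C n, IsOpenCover 𝒱 := covsD_cover σ _
    have hkey := keyD σ hσ (C n) hCcov
    have hpt : ptD σ (C n) = hkey.choose := by
      simp only [ptD]
      rw [dif_pos hkey]
    have hlegal := hg n
    have hptg : ptD σ (C n) ∈ g n := hlegal.2
    have hex : ∃ 𝒱, _root_.IsOpenCover 𝒱 ∧ σ (C n ++ [𝒱]) ⊆ g n := by
      have := hkey.choose_spec (g n) hlegal.1 (by rw [← hpt]; exact hptg)
      exact this
    have h𝒰n : 𝒰 n = hex.choose := by
      show nxtD σ (C n) (g n) = _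
      simp only [nxtD]
      rw [dif_pos hex]
    rw [hhist n, h𝒰n]
    exact hex.choose_spec.2
  have hwin := (hσ 𝒰 hcovs).2
  rw [Set.eq_univ_iff_forall]
  intro x
  have : x ∈ ⋃ n, σ (hist 𝒰 n) := hwin ▸ Set.mem_univ x
  obtain ⟨_, ⟨n, rfl⟩, hx⟩ := this
  exact Set.mem_iUnion.2 ⟨n, hsub n hx⟩

end GalvinDual

/-- The Rothberger game and the point-open game are dual. -/
theorem rothberger_pointOpen_dual (X : Type u) [TopologicalSpace X] :
    (RothOneWin X ↔ POTwoWin X) ∧ (RothTwoWin X ↔ POOneWin X) := by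
  rcases isEmpty_or_nonempty X with hE | hNE
  · have emptyCover : IsOpenCover (∅ : Set (Set X)) := by
      constructor
      · intro U hU; exact absurd hU (Set.notMem_empty U)
      · rw [Set.sUnion_empty]
        exact (Set.univ_eq_empty_iff.2 hE).symm
    constructor
    · constructor
      · intro _
        exact ⟨fun _ => ∅, fun x => (hE.false (x 0)).elim⟩
      · intro _
        exact ⟨fun _ => ∅, fun _ => emptyCover,
          fun g hg => absurd (hg 0) (Set.notMem_empty _)⟩
    · constructor
      · rintro ⟨σ, hσ⟩
        exact absurd ((hσ (fun _ => ∅) (fun _ => emptyCover)).1 0) (Set.notMem_empty _)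
      · rintro ⟨σ, -⟩
        exact (hE.false (σ [])).elim
  · exact ⟨⟨GalvinDual.dirB, GalvinDual.dirA⟩, ⟨GalvinDual.dirD, GalvinDual.dirC⟩⟩
end

section
/- If One has a winning strategy in the point-open game on a topological space X, then the Gδ-modification X_δ is Lindelöf. -/
open Set TopologicalSpace

universe u

theorem poOneWin_gdelta_cover {X : Type u} [TopologicalSpace X] (h : POOneWin X)
    (𝒰 : Set (Set X)) (hGδ : ∀ U ∈ 𝒰, IsGδ U) (hcov : ⋃₀ 𝒰 = univ) :
    ∃ 𝒱 ⊆ 𝒰, 𝒱.Countable ∧ ⋃₀ 𝒱 = univ := by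
  obtain ⟨σ, hσ⟩ := h
  have hch : ∀ l : List (Set X), ∃ (U : Set X) (V : ℕ → Set X),
      U ∈ 𝒰 ∧ σ l ∈ U ∧ (∀ n, IsOpen (V n)) ∧ U = ⋂ n, V n := by
    intro l
    have hx : σ l ∈ ⋃₀ 𝒰 := hcov ▸ mem_univ _
    obtain ⟨U, hU, hxU⟩ := hx
    obtain ⟨V, hV, hUV⟩ := isGδ_iff_eq_iInter_nat.mp (hGδ U hU)
    exact ⟨U, V, hU, hxU, hV, hUV⟩
  choose Uf Vf hU hmem hVo hUV using hch
  let Q : List ℕ → List (Set X) := fun s =>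
    s.rec ([] : List (Set X)) (fun k _ ih => ih ++ [Vf ih k])
  refine ⟨Set.range (fun s : List ℕ => Uf (Q s)), ?_, countable_range _, ?_⟩
  · rintro _ ⟨s, rfl⟩; exact hU _
  · rw [eq_univ_iff_forall]
    intro x
    by_contra hx
    simp only [mem_sUnion, mem_range, not_exists, exists_prop, not_and] at hx
    have hk : ∀ s : List ℕ, ∃ k, x ∉ Vf (Q s) k := by
      intro s
      have := hx (Uf (Q s)) ⟨s, rfl⟩
      rw [hUV (Q s), mem_iInter] at this
      push_neg at this
      exact this
    choose k hkx using hk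
    let seq : ℕ → List ℕ := fun n => n.rec ([] : List ℕ) (fun _ ih => k ih :: ih)
    let g : ℕ → Set X := fun n => Vf (Q (seq n)) (k (seq n))
    have hQ : ∀ n, (List.range n).map g = Q (seq n) := by
      intro n
      induction n with
      | zero => rfl
      | succ n ih =>
        rw [List.range_succ, List.map_append, ih]
        rfl
    have hlegal : ∀ n, IsOpen (g n) ∧ σ ((List.range n).map g) ∈ g n := by
      intro n
      refine ⟨hVo _ _, ?_⟩
      rw [hQ n]
      have := hmem (Q (seq n))
      rw [hUV (Q (seq n)), mem_iInter] at this
      exact this _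
    have := hσ g hlegal
    rw [eq_univ_iff_forall] at this
    obtain ⟨_, ⟨n, rfl⟩, hxn⟩ := this x
    exact hkx (seq n) hxn

/-- One winning the point-open game implies the Gδ-modification is Lindelöf. -/
theorem poOneWin_gdelta_lindelof (X : Type u) [TopologicalSpace X] (h : POOneWin X) :
    @LindelofSpace X (gdeltaTop X) := by
  refine @LindelofSpace.mk X (gdeltaTop X) (@isLindelof_of_countable_subcover X (gdeltaTop X) univ ?_)
  intro ι U hUo hsU
  -- basis of Gδ sets for gdeltaTop
  let B : Set (Set X) :=
    (fun f : Set (Set X) => ⋂₀ f) '' { f : Set (Set X) | f.Finite ∧ f ⊆ {s : Set X | IsGδ s} }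
  have hB : @IsTopologicalBasis X (gdeltaTop X) B :=
    @isTopologicalBasis_of_subbasis X (gdeltaTop X) _ rfl
  have hBG : ∀ b ∈ B, IsGδ b := by
    rintro _ ⟨f, ⟨hf, hfs⟩, rfl⟩
    exact IsGδ.sInter (fun s hs => hfs hs) hf.countable
  set 𝒰 : Set (Set X) := {G : Set X | IsGδ G ∧ ∃ i, G ⊆ U i} with h𝒰
  have hcov : ⋃₀ 𝒰 = univ := by
    rw [eq_univ_iff_forall]
    intro x
    obtain ⟨i, hi⟩ := mem_iUnion.mp (hsU (mem_univ x))
    obtain ⟨b, hbB, hxb, hbU⟩ := @IsTopologicalBasis.exists_subset_of_mem_open X (gdeltaTop X) _ hB x (U i) hi (hUo i)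
    exact ⟨b, ⟨hBG b hbB, i, hbU⟩, hxb⟩
  obtain ⟨𝒱, h𝒱𝒰, h𝒱c, h𝒱cov⟩ := poOneWin_gdelta_cover h 𝒰 (fun G hG => hG.1) hcov
  have : ∀ V : 𝒱, ∃ i, (V : Set X) ⊆ U i := fun V => (h𝒱𝒰 V.2).2
  choose iv hiv using this
  haveI : Countable 𝒱 := h𝒱c.to_subtype
  refine ⟨Set.range iv, countable_range _, ?_⟩
  intro x _
  have hx : x ∈ ⋃₀ 𝒱 := h𝒱cov ▸ mem_univ x
  obtain ⟨V, hV, hxV⟩ := hx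
  exact mem_iUnion₂.mpr ⟨iv ⟨V, hV⟩, mem_range_self _, hiv ⟨V, hV⟩ hxV⟩
end

section
/- If X is a regular Lindelöf scattered space, then the Gδ-modification X_δ is Lindelöf. -/
open Set TopologicalSpace

universe u

/-- Every point of a set open in the Gδ-modification lies in a Gδ subset of it. -/
lemma gdelta_basis_aux {X : Type u} [TopologicalSpace X] {W : Set X}
    (hW : TopologicalSpace.GenerateOpen {s : Set X | IsGδ s} W) :
    ∀ x ∈ W, ∃ G : Set X, IsGδ G ∧ x ∈ G ∧ G ⊆ W := by
  induction hW with
  | basic s hs => exact fun x hx => ⟨s, hs, hx, subset_rfl⟩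
  | univ => exact fun x _ => ⟨univ, IsGδ.univ, mem_univ x, subset_rfl⟩
  | inter s t hs ht ihs iht =>
      rintro x ⟨hxs, hxt⟩
      obtain ⟨G₁, h₁, hx₁, hs₁⟩ := ihs x hxs
      obtain ⟨G₂, h₂, hx₂, hs₂⟩ := iht x hxt
      exact ⟨G₁ ∩ G₂, h₁.inter h₂, ⟨hx₁, hx₂⟩, inter_subset_inter hs₁ hs₂⟩
  | sUnion S hS ih =>
      rintro x ⟨s, hsS, hxs⟩
      obtain ⟨G, hG, hxG, hGs⟩ := ih s hsS x hxs
      exact ⟨G, hG, hxG, hGs.trans (subset_sUnion_of_mem hsS)⟩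



lemma gdelta_cover_countable_subcover_s7 {X : Type u} [TopologicalSpace X] [RegularSpace X]
    [LindelofSpace X] (h : Scattered X) (G : X → Set X)
    (hGδ : ∀ x, IsGδ (G x)) (hmem : ∀ x, x ∈ G x) :
    ∃ T : Set X, T.Countable ∧ (⋃ x ∈ T, G x) = univ := by
  classical
  -- countably coverable sets
  set CCov : Set X → Prop := fun s => ∃ T : Set X, T.Countable ∧ s ⊆ ⋃ x ∈ T, G x with hCCov
  have ccov_mono : ∀ {s t : Set X}, s ⊆ t → CCov t → CCov s := by
    rintro s t hst ⟨T, hTc, hTs⟩; exact ⟨T, hTc, hst.trans hTs⟩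
  have ccov_iUnion : ∀ {ι : Type u} (t : Set ι) (f : ι → Set X), t.Countable →
      (∀ i ∈ t, CCov (f i)) → CCov (⋃ i ∈ t, f i) := by
    intro ι t f htc hf
    choose T hTc hTs using hf
    refine ⟨⋃ i ∈ t, ⋃ (hi : i ∈ t), T i hi, htc.biUnion fun i hi => countable_iUnion fun hi' => hTc i hi', ?_⟩
    refine iUnion₂_subset fun i hi => (hTs i hi).trans ?_
    refine iUnion₂_mono' fun x hx => ⟨x, ?_, subset_rfl⟩
    exact mem_biUnion hi (mem_iUnion.2 ⟨hi, hx⟩)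
  have ccov_iUnion_nat : ∀ (f : ℕ → Set X), (∀ n, CCov (f n)) → CCov (⋃ n, f n) := by
    intro f hf
    choose T hTc hTs using hf
    refine ⟨⋃ n, T n, countable_iUnion hTc, iUnion_subset fun n => (hTs n).trans ?_⟩
    exact iUnion₂_mono' fun x hx => ⟨x, mem_iUnion.2 ⟨n, hx⟩, subset_rfl⟩
  set 𝒪 : Set X := ⋃₀ {W : Set X | IsOpen W ∧ CCov W} with h𝒪
  have lemA : ∀ s : Set X, IsLindelof s → s ⊆ 𝒪 → CCov s := by
    intro s hs hsub
    obtain ⟨t, htc, hts⟩ := hs.elim_countable_subcover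
      (fun i : {W : Set X // IsOpen W ∧ CCov W} => (i : Set X))
      (fun i => i.2.1) (fun y hy => by
        obtain ⟨t, ht, hyt⟩ := mem_sUnion.1 (hsub hy)
        exact mem_iUnion.2 ⟨⟨t, ht⟩, hyt⟩)
    exact ccov_mono hts (ccov_iUnion t _ htc fun i _ => i.2.2)
  -- 𝒪 is everything
  have hall : ∀ y : X, y ∈ 𝒪 := by
    by_contra hne
    push_neg at hne
    have hFne : (𝒪ᶜ).Nonempty := by obtain ⟨y, hy⟩ := hne; exact ⟨y, hy⟩
    obtain ⟨x, hxF, U, hUo, hUF⟩ := h 𝒪ᶜ hFne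
    have hxU : x ∈ U := by
      have : x ∈ U ∩ 𝒪ᶜ := hUF ▸ rfl
      exact this.1
    obtain ⟨V, hVo, hGV⟩ := (hGδ x).eq_iInter_nat
    have hxV : ∀ n, x ∈ V n := by
      have := hmem x; rw [hGV] at this; exact fun n => mem_iInter.1 this n
    -- regularity: shrink closures
    have key : ∀ O : Set X, IsOpen O → x ∈ O →
        ∃ W : Set X, IsOpen W ∧ x ∈ W ∧ closure W ⊆ O := by
      intro O hO hxO
      obtain ⟨t, htn, htc, hts⟩ := exists_mem_nhds_isClosed_subset (hO.mem_nhds hxO)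
      exact ⟨interior t, isOpen_interior, mem_interior_iff_mem_nhds.2 htn,
        ((closure_mono interior_subset).trans htc.closure_subset).trans hts⟩
    set step : Set X → Set X := fun O =>
      if hc : IsOpen O ∧ x ∈ O then (key O hc.1 hc.2).choose else ∅ with hstep
    have step_spec : ∀ O : Set X, IsOpen O → x ∈ O →
        IsOpen (step O) ∧ x ∈ step O ∧ closure (step O) ⊆ O := by
      intro O h1 h2
      rw [hstep]; simp only [dif_pos (And.intro h1 h2)]
      exact (key O h1 h2).choose_spec
    set W : ℕ → Set X := fun n =>
      Nat.rec (step (V 0 ∩ U)) (fun n Wn => step (V (n + 1) ∩ Wn)) n with hWdef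
    have hWsucc : ∀ n, W (n + 1) = step (V (n + 1) ∩ W n) := fun n => rfl
    have hQ : ∀ n, IsOpen (W n) ∧ x ∈ W n ∧ closure (W n) ⊆ V n ∧ closure (W n) ⊆ U := by
      intro n
      induction n with
      | zero =>
          obtain ⟨h1, h2, h3⟩ := step_spec (V 0 ∩ U) ((hVo 0).inter hUo) ⟨hxV 0, hxU⟩
          exact ⟨h1, h2, h3.trans inter_subset_left, h3.trans inter_subset_right⟩
      | succ n ih =>
          obtain ⟨hWo, hWx, _, hWU⟩ := ih
          obtain ⟨h1, h2, h3⟩ := step_spec (V (n + 1) ∩ W n) ((hVo (n + 1)).inter hWo)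
            ⟨hxV (n + 1), hWx⟩
          rw [← hWsucc] at h1 h2 h3
          exact ⟨h1, h2, h3.trans inter_subset_left,
            (h3.trans inter_subset_right).trans (subset_closure.trans hWU)⟩
    have hchain : ∀ n, closure (W (n + 1)) ⊆ W n := by
      intro n
      obtain ⟨hWo, hWx, -, -⟩ := hQ n
      obtain ⟨-, -, h3⟩ := step_spec (V (n + 1) ∩ W n) ((hVo (n + 1)).inter hWo) ⟨hxV (n + 1), hWx⟩
      rw [← hWsucc] at h3
      exact h3.trans inter_subset_right
    -- annuli
    set C : ℕ → Set X := fun n => closure (W n) \ W (n + 1) with hC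
    have hCccov : ∀ n, CCov (C n) := by
      intro n
      refine lemA (C n) ((isClosed_closure.sdiff (hQ (n + 1)).1).isLindelof) ?_
      rintro y ⟨hy1, hy2⟩
      by_contra hy𝒪
      have : y ∈ U ∩ 𝒪ᶜ := ⟨(hQ n).2.2.2 hy1, hy𝒪⟩
      rw [hUF] at this
      exact hy2 (this ▸ (hQ (n + 1)).2.1)
    have hW0sub : W 0 ⊆ G x ∪ ⋃ n, C n := by
      intro y hy
      by_cases hall : ∀ n, y ∈ W n
      · left
        rw [hGV]
        exact mem_iInter.2 fun n => (hQ n).2.2.1 (subset_closure (hall n))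
      · right
        push_neg at hall
        have hex : ∃ n, y ∉ W n := hall
        have hfind := Nat.find_spec hex
        have hpos : Nat.find hex ≠ 0 := fun h0 => hfind (h0 ▸ hy)
        obtain ⟨m, hm⟩ := Nat.exists_eq_succ_of_ne_zero hpos
        refine mem_iUnion.2 ⟨m, subset_closure (not_not.1 (Nat.find_min hex (by omega))), ?_⟩
        rw [← Nat.succ_eq_add_one, ← hm]; exact hfind
    have hW0ccov : CCov (W 0) := by
      obtain ⟨T₁, hT₁c, hT₁s⟩ : CCov (⋃ n, C n) := ccov_iUnion_nat C hCccov
      refine ccov_mono hW0sub ⟨insert x T₁, hT₁c.insert x, ?_⟩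
      rintro y (hy | hy)
      · exact mem_biUnion (mem_insert x T₁) hy
      · obtain ⟨T, hT, hyT⟩ := mem_iUnion₂.1 (hT₁s hy)
        exact mem_biUnion (mem_insert_of_mem x hT) hyT
    exact hxF (mem_sUnion.2 ⟨W 0, ⟨(hQ 0).1, hW0ccov⟩, (hQ 0).2.1⟩)
  obtain ⟨T, hTc, hTs⟩ := lemA univ isLindelof_univ fun y _ => hall y
  exact ⟨T, hTc, eq_univ_of_univ_subset hTs⟩

/-- regular Lindelöf scattered implies the Gδ-modification is Lindelöf. -/
theorem lindelof_scattered_gdelta_lindelof (X : Type u) [TopologicalSpace X]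
    [RegularSpace X] [LindelofSpace X] (h : Scattered X) :
    @LindelofSpace X (gdeltaTop X) := by
  refine @LindelofSpace.mk X (gdeltaTop X)
    (@isLindelof_of_countable_subcover X (gdeltaTop X) univ ?_)
  intro ι U hU hcover
  have hU' : ∀ i, TopologicalSpace.GenerateOpen {s : Set X | IsGδ s} (U i) := hU
  have hx : ∀ x : X, ∃ i, x ∈ U i := fun x => mem_iUnion.1 (hcover (mem_univ x))
  choose i hi using hx
  have hbasis := fun x => gdelta_basis_aux (hU' (i x)) x (hi x)
  choose G hGδ hmem hsub using hbasis
  obtain ⟨T, hTc, hTu⟩ := gdelta_cover_countable_subcover_s7 h G hGδ hmem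
  refine ⟨i '' T, hTc.image i, fun y _ => ?_⟩
  have hy : y ∈ ⋃ x ∈ T, G x := hTu ▸ mem_univ y
  obtain ⟨x, hxT, hyG⟩ := mem_iUnion₂.1 hy
  exact mem_iUnion₂.2 ⟨i x, mem_image_of_mem i hxT, hsub x hyG⟩
end

section
/- A topological space X satisfies S₁(ℛ, 𝒪) if and only if X is a Rothberger space, where ℛ is the family of R-covers of X. -/
open Set TopologicalSpace

universe u

/-- An R-cover: an open cover such that every Rothberger subspace is contained in a member. -/
def IsRCover {X : Type u} [TopologicalSpace X] (𝒰 : Set (Set X)) : Prop :=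
  IsOpenCover 𝒰 ∧ ∀ S : Set X, RothbergerSpace S → ∃ U ∈ 𝒰, S ⊆ U

/-- S₁(ℛ, 𝒪) holds iff X is Rothberger. -/
theorem S1_rcover_iff_rothberger (X : Type u) [TopologicalSpace X] :
    (∀ 𝒰 : ℕ → Set (Set X), (∀ n, IsRCover (𝒰 n)) →
      ∃ f : ℕ → Set X, (∀ n, f n ∈ 𝒰 n) ∧ (⋃ n, f n) = univ) ↔
    RothbergerSpace X := by
  constructor
  · -- S₁(ℛ,𝒪) → Rothberger
    intro h 𝒰 h𝒰
    -- For each k, the family of unions of selections from covers 𝒰 (Nat.pair k m)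
    set 𝒱 : ℕ → Set (Set X) := fun k =>
      {V | ∃ g : ℕ → Set X, (∀ m, g m ∈ 𝒰 (Nat.pair k m)) ∧ V = ⋃ m, g m} with h𝒱
    have h𝒱R : ∀ k, IsRCover (𝒱 k) := by
      intro k
      refine ⟨⟨?_, ?_⟩, ?_⟩
      · rintro V ⟨g, hg, rfl⟩
        exact isOpen_iUnion fun m => (h𝒰 _).1 _ (hg m)
      · apply Set.eq_univ_of_forall
        intro x
        have hsel : ∀ m : ℕ, ∃ U, U ∈ 𝒰 (Nat.pair k m) ∧ x ∈ U := by
          intro m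
          have : x ∈ ⋃₀ 𝒰 (Nat.pair k m) := by rw [(h𝒰 _).2]; trivial
          obtain ⟨U, hU, hxU⟩ := this
          exact ⟨U, hU, hxU⟩
        choose g hg hxg using hsel
        exact ⟨⋃ m, g m, ⟨g, hg, rfl⟩, Set.mem_iUnion.2 ⟨0, hxg 0⟩⟩
      · -- every Rothberger subspace is contained in a union of a selection
        intro S hS
        -- trace the covers 𝒰 (Nat.pair k m) onto S
        set 𝒲 : ℕ → Set (Set S) := fun m =>
          {W | ∃ U ∈ 𝒰 (Nat.pair k m), W = (Subtype.val) ⁻¹' U} with h𝒲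
        have h𝒲oc : ∀ m, IsOpenCover (𝒲 m) := by
          intro m
          constructor
          · rintro W ⟨U, hU, rfl⟩
            exact (isOpen_induced_iff).2 ⟨U, (h𝒰 _).1 _ hU, rfl⟩
          · apply Set.eq_univ_of_forall
            intro s
            have : (s : X) ∈ ⋃₀ 𝒰 (Nat.pair k m) := by rw [(h𝒰 _).2]; trivial
            obtain ⟨U, hU, hsU⟩ := this
            exact ⟨(Subtype.val) ⁻¹' U, ⟨U, hU, rfl⟩, hsU⟩
        obtain ⟨f, hf, hfcov⟩ := hS 𝒲 h𝒲oc
        choose g hg hgf using hf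
        refine ⟨⋃ m, g m, ⟨g, hg, rfl⟩, ?_⟩
        intro x hx
        have : (⟨x, hx⟩ : S) ∈ ⋃ m, f m := by rw [hfcov]; trivial
        obtain ⟨m, hm⟩ := Set.mem_iUnion.1 this
        rw [hgf m] at hm
        exact Set.mem_iUnion.2 ⟨m, hm⟩
    obtain ⟨F, hF, hFcov⟩ := h 𝒱 h𝒱R
    choose g hg hgF using hF
    refine ⟨fun n => g n.unpair.1 n.unpair.2, ?_, ?_⟩
    · intro n
      have := hg n.unpair.1 n.unpair.2
      rwa [Nat.pair_unpair] at this
    · apply Set.eq_univ_of_forall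
      intro x
      have : x ∈ ⋃ k, F k := by rw [hFcov]; trivial
      obtain ⟨k, hk⟩ := Set.mem_iUnion.1 this
      rw [hgF k] at hk
      obtain ⟨m, hm⟩ := Set.mem_iUnion.1 hk
      refine Set.mem_iUnion.2 ⟨Nat.pair k m, ?_⟩
      simpa [Nat.unpair_pair] using hm
  · -- Rothberger → S₁(ℛ,𝒪)
    intro h 𝒰 h𝒰
    exact h 𝒰 fun n => (h𝒰 n).1
end

section
/- The one-point Lindelöfication X = A ∪ {p} of an uncountable discrete space A is a Lindelöf scattered regular space that is not σ-compact, and Two has a winning strategy in the Rothberger game on X. -/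
open Set TopologicalSpace

universe u

/-- The one-point Lindelöfication of a discrete space `A`: the point `none` has
the cocountable sets as neighbourhoods, and all points of `A` are isolated. -/
def lindTop (A : Type u) : TopologicalSpace (Option A) where
  IsOpen s := none ∈ s → sᶜ.Countable
  isOpen_univ := fun _ => by simp
  isOpen_inter := fun s t hs ht h => by
    rw [Set.compl_inter]; exact (hs h.1).union (ht h.2)
  isOpen_sUnion := fun S h hmem => by
    obtain ⟨s, hsS, hns⟩ := hmem
    exact Set.Countable.mono (Set.compl_subset_compl.2 (Set.subset_sUnion_of_mem hsS))
      (h s hsS hns)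


section OnePointAux

variable {A : Type u}

lemma lind_isOpen_iff {s : Set (Option A)} :
    @IsOpen _ (lindTop A) s ↔ (none ∈ s → sᶜ.Countable) := Iff.rfl

open Classical in
/-- Pick a member of `C` containing `x`, if one exists. -/
noncomputable def pickSet {X : Type u} (C : Set (Set X)) (x : X) : Set X :=
  if h : ∃ U ∈ C, x ∈ U then h.choose else univ

lemma pickSet_spec {X : Type u} {C : Set (Set X)} (hC : ⋃₀ C = univ) (x : X) :
    pickSet C x ∈ C ∧ x ∈ pickSet C x := by
  have h : ∃ U ∈ C, x ∈ U := by
    have : x ∈ ⋃₀ C := hC ▸ mem_univ x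
    exact this
  classical
  rw [pickSet, dif_pos h]
  exact ⟨h.choose_spec.1, h.choose_spec.2⟩

open Classical in
/-- An enumeration of a countable set. -/
noncomputable def enumOf {X : Type u} [Nonempty X] (s : Set X) : ℕ → X :=
  if h : s.Nonempty ∧ s.Countable then (h.2.exists_eq_range h.1).choose
  else fun _ => Classical.arbitrary X

lemma enumOf_covers {X : Type u} [Nonempty X] {s : Set X} (hs : s.Countable) :
    s ⊆ Set.range (enumOf s) := by
  rcases s.eq_empty_or_nonempty with h | h
  · simp [h]
  · have hc : s.Nonempty ∧ s.Countable := ⟨h, hs⟩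
    classical
    rw [enumOf, dif_pos hc]
    exact (hc.2.exists_eq_range hc.1).choose_spec.le

lemma hist_length {α : Type u} (f : ℕ → α) (n : ℕ) : (hist f n).length = n + 1 := by
  simp [hist]

lemma hist_getLastI {α : Type u} [Inhabited α] (f : ℕ → α) (n : ℕ) :
    (hist f n).getLastI = f n := by
  simp [hist, List.range_succ, List.getLastI_eq_getLast?]

lemma hist_headI {α : Type u} [Inhabited α] (f : ℕ → α) (n : ℕ) :
    (hist f n).headI = f 0 := by
  simp [hist, List.range_succ_eq_map]

/-- Two's strategy in the Rothberger game on the one-point Lindelöfication. -/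
noncomputable def lindStrat (A : Type u) : List (Set (Set (Option A))) → Set (Option A) :=
  fun l => pickSet l.getLastI
    (if l.length ≤ 1 then none
     else enumOf (pickSet l.headI (none : Option A))ᶜ (l.length - 2))

lemma lind_compact_countable {K : Set (Option A)} (hK : @IsCompact _ (lindTop A) K) :
    K.Countable := by
  letI := lindTop A
  by_contra hKc
  have hS : ¬ (K \ {none}).Countable := by
    intro h
    exact hKc (((h.union (countable_singleton (none : Option A))).mono) (by
      intro x hx
      by_cases hx0 : x = none
      · exact Or.inr (by simp [hx0])
      · exact Or.inl ⟨hx, hx0⟩))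
  have hSinf : (K \ {none}).Infinite := fun h => hS h.countable
  let e := hSinf.natEmbedding
  let T : Set (Option A) := Set.range fun n => (e n : Option A)
  have hTc : T.Countable := countable_range _
  have hTS : T ⊆ K \ {none} := by rintro x ⟨n, rfl⟩; exact (e n).2
  have hTinf : T.Infinite := Set.infinite_range_of_injective
    (fun a b hab => e.injective (Subtype.ext hab))
  -- the open cover
  let U : Option A → Set (Option A) := fun x => Option.rec Tᶜ (fun a => {some a}) x
  have hUopen : ∀ x, IsOpen (U x) := by
    intro x
    cases x with
    | none =>
        show IsOpen Tᶜ
        rw [lind_isOpen_iff]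
        intro _
        rwa [compl_compl]
    | some a =>
        show IsOpen {some a}
        rw [lind_isOpen_iff]
        intro h
        cases h
  have hUcov : K ⊆ ⋃ x, U x := by
    intro y hy
    refine mem_iUnion.mpr ⟨y, ?_⟩
    cases y with
    | none =>
        show none ∈ Tᶜ
        intro hyT
        exact (hTS hyT).2 rfl
    | some a => exact rfl
  obtain ⟨t, ht⟩ := hK.elim_finite_subcover U hUopen hUcov
  have : T ⊆ (t : Set (Option A)) := by
    intro y hyT
    obtain ⟨x, hxt, hyx⟩ := mem_iUnion₂.mp (ht ((hTS hyT).1))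
    cases x with
    | none => exact absurd hyT hyx
    | some a =>
        have : y = some a := hyx
        rwa [this]
  exact hTinf (t.finite_toSet.subset this)

end OnePointAux

/-- the one-point Lindelöfication of an uncountable discrete space is a
Lindelöf scattered regular space which is not σ-compact, and Two has a winning
strategy in the Rothberger game on it. -/
theorem onePointLindelofication (A : Type u) [Uncountable A] :
    @LindelofSpace (Option A) (lindTop A) ∧
    @Scattered (Option A) (lindTop A) ∧
    @RegularSpace (Option A) (lindTop A) ∧
    ¬ @SigmaCompactSpace (Option A) (lindTop A) ∧
    @RothTwoWin (Option A) (lindTop A) := by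
  letI := lindTop A
  haveI : Nonempty (Option A) := ⟨none⟩
  refine ⟨?_, ?_, ?_, ?_, ?_⟩
  · -- Lindelöf
    constructor
    apply isLindelof_iff_countable_subcover.mpr
    intro ι U hUo hUc
    obtain ⟨i₀, hi₀⟩ := mem_iUnion.mp (hUc (mem_univ none))
    have hcompl : (U i₀)ᶜ.Countable := (lind_isOpen_iff.mp (hUo i₀)) hi₀
    have hch : ∀ x : Option A, ∃ i, x ∈ U i := fun x => mem_iUnion.mp (hUc (mem_univ x))
    choose f hf using hch
    refine ⟨insert i₀ (f '' (U i₀)ᶜ), (hcompl.image f).insert i₀, ?_⟩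
    intro x _
    by_cases hx : x ∈ U i₀
    · exact mem_iUnion₂.mpr ⟨i₀, mem_insert _ _, hx⟩
    · exact mem_iUnion₂.mpr ⟨f x, mem_insert_of_mem _ ⟨x, hx, rfl⟩, hf x⟩
  · -- Scattered
    intro S hS
    by_cases h : ∃ a : A, some a ∈ S
    · obtain ⟨a, ha⟩ := h
      refine ⟨some a, ha, {some a}, ?_, ?_⟩
      · rw [lind_isOpen_iff]; intro h'; cases h'
      · ext y
        simp only [mem_inter_iff, mem_singleton_iff]
        exact ⟨fun ⟨h1, _⟩ => h1, fun hy => ⟨hy, hy ▸ ha⟩⟩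
    · have hSn : S = {none} := by
        ext y
        constructor
        · intro hy
          cases y with
          | none => rfl
          | some a => exact absurd ⟨a, hy⟩ h
        · rintro rfl
          obtain ⟨y, hy⟩ := hS
          cases y with
          | none => exact hy
          | some a => exact absurd ⟨a, hy⟩ h
      exact ⟨none, hSn ▸ rfl, univ, isOpen_univ, by rw [hSn, univ_inter]⟩
  · -- Regular
    apply RegularSpace.of_exists_mem_nhds_isClosed_subset
    intro x s hs
    obtain ⟨V, hVs, hVo, hxV⟩ := mem_nhds_iff.mp hs
    cases x with
    | none =>
        refine ⟨V, hVo.mem_nhds hxV, ?_, hVs⟩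
        rw [← isOpen_compl_iff, lind_isOpen_iff]
        intro h
        exact absurd hxV h
    | some a =>
        refine ⟨{some a}, ?_, ?_, fun y hy => hVs (mem_singleton_iff.mp hy ▸ hxV)⟩
        · refine IsOpen.mem_nhds ?_ rfl
          rw [lind_isOpen_iff]; intro h'; cases h'
        · rw [← isOpen_compl_iff, lind_isOpen_iff]
          intro _
          rw [compl_compl]
          exact countable_singleton _
  · -- not σ-compact
    intro h
    obtain ⟨K, hKc, hKu⟩ := h.isSigmaCompact_univ
    have : (univ : Set (Option A)).Countable := by
      rw [← hKu]
      exact countable_iUnion fun n => lind_compact_countable (hKc n)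
    have : Countable (Option A) := countable_univ_iff.mp this
    have : Countable A := Function.Injective.countable (Option.some_injective A)
    exact (not_countable : ¬ Countable A) this
  · -- Rothberger, Two wins
    refine ⟨lindStrat A, ?_⟩
    intro 𝒰 h𝒰
    set U0 := pickSet (𝒰 0) (none : Option A) with hU0def
    have hU0 := pickSet_spec (h𝒰 0).2 (none : Option A)
    have hU0compl : U0ᶜ.Countable := (lind_isOpen_iff.mp ((h𝒰 0).1 _ hU0.1)) hU0.2
    have hstrat0 : lindStrat A (hist 𝒰 0) = U0 := by
      simp [lindStrat, hist_length, hist_getLastI, hist_headI, hU0def]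
    have hstratS : ∀ n : ℕ, lindStrat A (hist 𝒰 (n + 1)) =
        pickSet (𝒰 (n + 1)) (enumOf U0ᶜ n) := by
      intro n
      simp [lindStrat, hist_length, hist_getLastI, hist_headI, hU0def]
    constructor
    · intro n
      cases n with
      | zero => rw [hstrat0]; exact hU0.1
      | succ m => rw [hstratS m]; exact (pickSet_spec (h𝒰 (m + 1)).2 _).1
    · apply eq_univ_of_forall
      intro x
      by_cases hx : x ∈ U0
      · exact mem_iUnion.mpr ⟨0, hstrat0 ▸ hx⟩
      · obtain ⟨k, hk⟩ := enumOf_covers hU0compl hx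
        refine mem_iUnion.mpr ⟨k + 1, ?_⟩
        rw [hstratS k, ← hk]
        exact (pickSet_spec (h𝒰 (k + 1)).2 _).2
end

section
/- Let X be the real line with the topology refining the Euclidean topology by declaring every countable set closed. Then every compact subset of X is finite. -/
open Set TopologicalSpace

universe u

/-- The refinement of the Euclidean topology on ℝ in which every countable set is closed. -/
def ctblClosedTop : TopologicalSpace ℝ :=
  generateFrom {s : Set ℝ | ∃ U C : Set ℝ, IsOpen U ∧ C.Countable ∧ s = U \ C}

/-- every compact subset of this space is finite. -/
theorem compact_finite_ctblClosedTop (K : Set ℝ) (hK : @IsCompact ℝ ctblClosedTop K) :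
    K.Finite := by
  by_contra h
  have hinf : K.Infinite := h
  let f : ℕ ↪ K := hinf.natEmbedding
  let e : ℕ → ℝ := fun n => (f n : ℝ)
  have he : Function.Injective e := Subtype.coe_injective.comp f.injective
  set C : Set ℝ := Set.range e with hC
  have hCc : C.Countable := Set.countable_range e
  let U : Option ℕ → Set ℝ := fun i => match i with
    | none => Set.univ \ C
    | some n => Set.univ \ (C \ {e n})
  have hUopen : ∀ i, @IsOpen ℝ ctblClosedTop (U i) := by
    intro i
    cases i with
    | none =>
      exact TopologicalSpace.GenerateOpen.basic _ ⟨Set.univ, C, isOpen_univ, hCc, rfl⟩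
    | some n =>
      exact TopologicalSpace.GenerateOpen.basic _
        ⟨Set.univ, C \ {e n}, isOpen_univ, hCc.mono Set.diff_subset, rfl⟩
  have hcover : K ⊆ ⋃ i, U i := by
    intro x hx
    by_cases hxC : x ∈ C
    · obtain ⟨n, rfl⟩ := hxC
      exact Set.mem_iUnion.2 ⟨some n, ⟨trivial, fun hmem => hmem.2 rfl⟩⟩
    · exact Set.mem_iUnion.2 ⟨none, ⟨trivial, hxC⟩⟩
  obtain ⟨t, ht⟩ := @IsCompact.elim_finite_subcover ℝ ctblClosedTop K (Option ℕ) hK U hUopen hcover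
  -- pick m with some m ∉ t
  obtain ⟨m, hm⟩ : ∃ m : ℕ, some m ∉ t := by
    by_contra hall
    push_neg at hall
    exact Set.infinite_range_of_injective (Option.some_injective ℕ)
      (Set.Finite.subset t.finite_toSet (fun x hx => by
        obtain ⟨n, rfl⟩ := hx; exact hall n))
  have hmK : e m ∈ K := (f m).2
  have := ht hmK
  rw [Set.mem_iUnion₂] at this
  obtain ⟨i, hit, hi⟩ := this
  cases i with
  | none => exact hi.2 ⟨m, rfl⟩
  | some k =>
    have hne : k ≠ m := fun hkm => hm (hkm ▸ hit)
    exact hi.2 ⟨⟨m, rfl⟩, fun heq => hne (he heq.symm)⟩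
end

section
/- Let L be a Luzin set of irrational reals and let X = L ∪ ℚ be topologized so that points of L are isolated and basic neighborhoods of q ∈ ℚ are {q} ∪ {x ∈ L : |x − q| < 1/(n+1)} for n ∈ ω. Then X is Lindelöf and scattered, but X_δ is not Lindelöf. -/
open Set TopologicalSpace

universe u

def ratReals : Set ℝ := Set.range ((↑) : ℚ → ℝ)

/-- The base for the topology on L ∪ ℚ: points of L are isolated, and basic
neighbourhoods of q ∈ ℚ are {q} ∪ {x ∈ L : |x − q| < 1/(n+1)}. -/
def luzinBase (L : Set ℝ) : Set (Set ↥(L ∪ ratReals)) :=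
  {s | (∃ x : ↥(L ∪ ratReals), (x : ℝ) ∈ L ∧ s = {x}) ∨
       (∃ q : ↥(L ∪ ratReals), (q : ℝ) ∉ L ∧ ∃ n : ℕ,
         s = {y : ↥(L ∪ ratReals) |
           y = q ∨ ((y : ℝ) ∈ L ∧ |(y : ℝ) - (q : ℝ)| < 1 / (n + 1))})}

def luzinTop (L : Set ℝ) : TopologicalSpace ↥(L ∪ ratReals) :=
  generateFrom (luzinBase L)

namespace LuzinAux

variable (L : Set ℝ)

def B (q : ↥(L ∪ ratReals)) (n : ℕ) : Set ↥(L ∪ ratReals) :=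
  {y | y = q ∨ ((y : ℝ) ∈ L ∧ |(y : ℝ) - (q : ℝ)| < 1 / (n + 1))}

lemma B_mem_base {q : ↥(L ∪ ratReals)} (hq : (q : ℝ) ∉ L) (n : ℕ) :
    B L q n ∈ luzinBase L := Or.inr ⟨q, hq, n, rfl⟩

lemma self_mem_B (q : ↥(L ∪ ratReals)) (n : ℕ) : q ∈ B L q n := Or.inl rfl

lemma B_anti {q : ↥(L ∪ ratReals)} {m n : ℕ} (h : m ≤ n) : B L q n ⊆ B L q m := by
  rintro y (rfl | ⟨hy, hlt⟩)
  · exact Or.inl rfl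
  · refine Or.inr ⟨hy, lt_of_lt_of_le hlt ?_⟩
    apply one_div_le_one_div_of_le
    · positivity
    · exact_mod_cast by exact_mod_cast Nat.succ_le_succ h

lemma key {U : Set ↥(L ∪ ratReals)} (hU : GenerateOpen (luzinBase L) U) :
    ∀ q ∈ U, (q : ℝ) ∉ L → ∃ n, B L q n ⊆ U := by
  induction hU with
  | basic s hs =>
      intro q hq hqL
      rcases hs with ⟨x, hxL, rfl⟩ | ⟨q', hq'L, n, rfl⟩
      · exact absurd (hq ▸ hxL) hqL
      · rcases hq with rfl | ⟨hqmem, _⟩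
        · exact ⟨n, le_refl _⟩
        · exact absurd hqmem hqL
  | univ => intro q _ _; exact ⟨0, subset_univ _⟩
  | inter s t _ _ ihs iht =>
      intro q hq hqL
      obtain ⟨m, hm⟩ := ihs q hq.1 hqL
      obtain ⟨n, hn⟩ := iht q hq.2 hqL
      exact ⟨max m n, subset_inter ((B_anti L (le_max_left m n)).trans hm)
        ((B_anti L (le_max_right m n)).trans hn)⟩
  | sUnion S _ ih =>
      intro q hq hqL
      obtain ⟨s, hsS, hqs⟩ := hq
      obtain ⟨n, hn⟩ := ih s hsS q hqs hqL
      exact ⟨n, hn.trans (subset_sUnion_of_mem hsS)⟩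

end LuzinAux

open LuzinAux

/-- for a Luzin set L of irrationals, the space X = L ∪ ℚ is
Lindelöf and scattered, but its Gδ-modification is not Lindelöf. -/
theorem luzin_space (L : Set ℝ) (h1 : ¬ L.Countable)
    (h2 : ∀ A : Set ℝ, IsNowhereDense A → (L ∩ A).Countable)
    (h3 : ∀ x ∈ L, Irrational x) :
    @LindelofSpace ↥(L ∪ ratReals) (luzinTop L) ∧
    @Scattered ↥(L ∪ ratReals) (luzinTop L) ∧
    ¬ @LindelofSpace ↥(L ∪ ratReals) (@gdeltaTop ↥(L ∪ ratReals) (luzinTop L)) := by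
  set X := ↥(L ∪ ratReals) with hX
  -- rational points are not in L
  have hratL : ∀ x : X, (x : ℝ) ∉ L ↔ (x : ℝ) ∈ ratReals := by
    intro x
    constructor
    · intro h; rcases x.2 with h' | h'
      · exact absurd h' h
      · exact h'
    · rintro ⟨r, hr⟩ hl
      exact (h3 _ hl) ⟨r, hr⟩
  have hQc : {x : X | (x : ℝ) ∉ L}.Countable := by
    have : {x : X | (x : ℝ) ∉ L} ⊆ (Subtype.val : X → ℝ) ⁻¹' ratReals := by
      intro x hx; exact (hratL x).1 hx
    exact ((countable_range _).preimage Subtype.val_injective).mono this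
  -- opens in luzinTop
  have hBopen : ∀ (q : X) (n : ℕ), (q : ℝ) ∉ L → @IsOpen X (luzinTop L) (B L q n) :=
    fun q n hq => GenerateOpen.basic _ (B_mem_base L hq n)
  have hSingOpen : ∀ x : X, (x : ℝ) ∈ L → @IsOpen X (luzinTop L) {x} :=
    fun x hx => GenerateOpen.basic _ (Or.inl ⟨x, hx, rfl⟩)
  refine ⟨?_, ?_, ?_⟩
  · -- Lindelöf
    letI : TopologicalSpace X := luzinTop L
    refine ⟨isLindelof_iff_countable_subcover.mpr ?_⟩
    intro ι U hUopen hcov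
    -- choose basic neighborhoods for rational points
    have hchoiceQ : ∀ q : {x : X // (x : ℝ) ∉ L}, ∃ (i : ι) (n : ℕ),
        B L q.1 n ⊆ U i := by
      intro q
      obtain ⟨i, hi⟩ := mem_iUnion.1 (hcov (mem_univ q.1))
      obtain ⟨n, hn⟩ := key L (hUopen i) q.1 hi q.2
      exact ⟨i, n, hn⟩
    choose iq nq hq using hchoiceQ
    set A : Set ℝ :=
      (⋃ q : {x : X // (x : ℝ) ∉ L}, Metric.ball ((q.1 : ℝ)) (1 / (nq q + 1)))ᶜ with hA
    have hAclosed : IsClosed A :=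
      (isOpen_iUnion fun q => Metric.isOpen_ball).isClosed_compl
    have hAnwd : IsNowhereDense A := by
      rw [hAclosed.isNowhereDense_iff]
      rw [eq_empty_iff_forall_notMem]
      intro x hx
      obtain ⟨y, hy⟩ := Rat.denseRange_cast.exists_mem_open isOpen_interior
        ⟨x, hx⟩
      have hyX : ((y : ℝ)) ∈ L ∪ ratReals := Or.inr ⟨y, rfl⟩
      have hyL : ((⟨(y : ℝ), hyX⟩ : X) : ℝ) ∉ L := fun h => (h3 _ h) ⟨y, rfl⟩
      have : (y : ℝ) ∈ A := interior_subset hy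
      apply this
      exact mem_iUnion.2 ⟨⟨⟨(y : ℝ), hyX⟩, hyL⟩, by
        simp [Metric.mem_ball, dist_self]; positivity⟩
    have hRc : {x : X | (x : ℝ) ∈ L ∧ (x : ℝ) ∈ A}.Countable := by
      have : {x : X | (x : ℝ) ∈ L ∧ (x : ℝ) ∈ A} ⊆
          (Subtype.val : X → ℝ) ⁻¹' (L ∩ A) := fun x hx => hx
      exact ((h2 A hAnwd).preimage Subtype.val_injective).mono this
    have hchoiceR : ∀ r : {x : X // (x : ℝ) ∈ L ∧ (x : ℝ) ∈ A}, ∃ i : ι, r.1 ∈ U i :=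
      fun r => mem_iUnion.1 (hcov (mem_univ r.1))
    choose ir hir using hchoiceR
    haveI : Countable {x : X // (x : ℝ) ∉ L} := hQc.to_subtype
    haveI : Countable {x : X // (x : ℝ) ∈ L ∧ (x : ℝ) ∈ A} := hRc.to_subtype
    refine ⟨range iq ∪ range ir, (countable_range iq).union (countable_range ir), ?_⟩
    intro x _
    by_cases hxL : (x : ℝ) ∈ L
    · by_cases hxA : (x : ℝ) ∈ A
      · exact mem_iUnion₂.2 ⟨ir ⟨x, hxL, hxA⟩, Or.inr (mem_range_self _),
          hir ⟨x, hxL, hxA⟩⟩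
      · rw [hA, mem_compl_iff, not_not] at hxA
        obtain ⟨q, hq'⟩ := mem_iUnion.1 hxA
        rw [Metric.mem_ball, Real.dist_eq] at hq'
        exact mem_iUnion₂.2 ⟨iq q, Or.inl (mem_range_self _),
          hq q (Or.inr ⟨hxL, hq'⟩)⟩
    · exact mem_iUnion₂.2 ⟨iq ⟨x, hxL⟩, Or.inl (mem_range_self _),
        hq ⟨x, hxL⟩ (self_mem_B L x _)⟩
  · -- Scattered
    letI : TopologicalSpace X := luzinTop L
    intro S hS
    by_cases h : ∃ x ∈ S, (x : ℝ) ∈ L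
    · obtain ⟨x, hxS, hxL⟩ := h
      exact ⟨x, hxS, {x}, hSingOpen x hxL,
        inter_eq_self_of_subset_left (singleton_subset_iff.2 hxS)⟩
    · push_neg at h
      obtain ⟨x, hxS⟩ := hS
      have hxL := h x hxS
      refine ⟨x, hxS, B L x 0, hBopen x 0 hxL, ?_⟩
      ext y
      simp only [mem_inter_iff, mem_singleton_iff]
      constructor
      · rintro ⟨(rfl | ⟨hyL, _⟩), hyS⟩
        · rfl
        · exact absurd hyL (h y hyS)
      · rintro rfl; exact ⟨self_mem_B L _ 0, hxS⟩
  · -- Gδ modification not Lindelöf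
    intro hLin
    letI t1 : TopologicalSpace X := luzinTop L
    have hsing : ∀ x : X, @IsOpen X (@gdeltaTop X t1) {x} := by
      intro x
      by_cases hx : (x : ℝ) ∈ L
      · exact GenerateOpen.basic _ ((hSingOpen x hx).isGδ)
      · have heq : ({x} : Set X) = ⋂ n : ℕ, B L x n := by
          ext y
          simp only [mem_singleton_iff, mem_iInter]
          constructor
          · rintro rfl n; exact self_mem_B L _ n
          · intro hy
            by_contra hne
            have hyx : (y : ℝ) ≠ (x : ℝ) := fun h => hne (Subtype.ext h)
            have hpos : 0 < |(y : ℝ) - (x : ℝ)| := abs_pos.2 (sub_ne_zero.2 hyx)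
            obtain ⟨n, hn⟩ := exists_nat_one_div_lt hpos
            rcases hy n with rfl | ⟨_, hlt⟩
            · exact hne rfl
            · exact absurd hlt (not_lt.2 (le_of_lt hn))
        rw [heq]
        exact GenerateOpen.basic _ (IsGδ.iInter_of_isOpen fun n => hBopen x n hx)
    letI := @gdeltaTop X t1
    obtain ⟨t, htc, hcov⟩ := isLindelof_iff_countable_subcover.1 hLin.isLindelof_univ
      (fun x : X => {x}) hsing (by intro x _; exact mem_iUnion.2 ⟨x, rfl⟩)
    have hXc : (univ : Set X).Countable := by
      refine htc.mono fun x hx => ?_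
      simpa using hcov (mem_univ x)
    apply h1
    have : L ⊆ Subtype.val '' (univ : Set X) := fun x hx =>
      ⟨⟨x, Or.inl hx⟩, mem_univ _, rfl⟩
    exact (hXc.image _).mono this
end

section
/- If X is a topological space in which every compact subset is a Gδ set and X is an Alster space, then X is σ-compact. -/
open Set TopologicalSpace

universe u

/-- if every compact subset of X is Gδ and X is Alster, then X is σ-compact. -/
theorem alster_sigmaCompact (X : Type u) [TopologicalSpace X]
    (hGd : ∀ K : Set X, IsCompact K → IsGδ K) (hA : AlsterSpace X) :
    ∃ K : ℕ → Set X, (∀ n, IsCompact (K n)) ∧ (⋃ n, K n) = univ := by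
  obtain ⟨𝒱, h𝒱sub, h𝒱cnt, h𝒱cov⟩ := hA {K | IsCompact K}
    ⟨fun U hU => hGd U hU, by
      apply eq_univ_of_forall; intro x
      exact ⟨{x}, isCompact_singleton, rfl⟩,
      fun K hK => ⟨K, hK, subset_rfl⟩⟩
  rcases 𝒱.eq_empty_or_nonempty with h | h
  · refine ⟨fun _ => ∅, fun _ => isCompact_empty, ?_⟩
    simp only [h, sUnion_empty] at h𝒱cov
    simp [← h𝒱cov]
  · obtain ⟨f, hf⟩ := h𝒱cnt.exists_eq_range h
    refine ⟨f, fun n => h𝒱sub (hf ▸ mem_range_self n), ?_⟩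
    rw [← h𝒱cov, hf, sUnion_range]
end
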